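/- arXiv:1607.05838 — 10 statements merged into one kernel-verified Lean document; each statement's English description precedes it below -/
import Mathlib

section
/- Let F be a field, n a positive integer, and A ∈ F^{n×n} a matrix whose null space has dimension k₀ (the nullity of A). Then the twisted centralizer code C_F(A,0) has dimension k₀·n. In particular, if A ≠ 0 then dim C_F(A,0) ≤ n(n−1) and every matrix in C_F(A,0) is singular. -/
open Matrix Module

/-- The twisted centralizer code `C_F(A,λ) = {B | A*B - λ*B*A = 0}`. -/
noncomputable def twistedCentralizer {F : Type*} [Field F] {m : Type*} [Fintype m] [DecidableEq m]
    (A : Matrix m m F) (lam : F) : Submodule F (Matrix m m F) :=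
  LinearMap.ker (LinearMap.mulLeft F A - lam • LinearMap.mulRight F A)

lemma mem_twistedCentralizer_zero {F : Type*} [Field F] {m : Type*} [Fintype m] [DecidableEq m]
    (A B : Matrix m m F) : B ∈ twistedCentralizer A 0 ↔ A * B = 0 := by
  simp [twistedCentralizer, LinearMap.mem_ker, LinearMap.mulLeft_apply]

lemma mul_eq_zero_iff_cols {F : Type*} [Field F] {m : Type*} [Fintype m] [DecidableEq m]
    (A B : Matrix m m F) : A * B = 0 ↔ ∀ j, A.mulVec (fun i => B i j) = 0 := by
  constructor
  · intro h j
    funext i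
    have := congrFun (congrFun h i) j
    simpa [Matrix.mul_apply, Matrix.mulVec, dotProduct] using this
  · intro h
    funext i j
    have := congrFun (h j) i
    simpa [Matrix.mul_apply, Matrix.mulVec, dotProduct] using this

noncomputable def twistedEquiv {F : Type*} [Field F] {n : ℕ} (A : Matrix (Fin n) (Fin n) F) :
    (twistedCentralizer A 0) ≃ₗ[F] (Fin n → LinearMap.ker A.mulVecLin) where
  toFun B j := ⟨fun i => B.1 i j, by
    have := (mul_eq_zero_iff_cols A B.1).mp ((mem_twistedCentralizer_zero A B.1).mp B.2) j
    simpa [LinearMap.mem_ker] using this⟩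
  invFun g := ⟨Matrix.of (fun i j => (g j).1 i), by
    rw [mem_twistedCentralizer_zero, mul_eq_zero_iff_cols]
    intro j
    exact (g j).2⟩
  map_add' B C := rfl
  map_smul' c B := rfl
  left_inv B := rfl
  right_inv g := rfl

lemma finrank_ker_vecMulLinear {F : Type*} [Field F] {n : ℕ} (A : Matrix (Fin n) (Fin n) F) :
    finrank F (LinearMap.ker A.vecMulLinear) = n - A.rank := by
  have h1 : A.vecMulLinear = Aᵀ.mulVecLin := by
    rw [Matrix.mulVecLin_transpose]
  have h2 := LinearMap.finrank_range_add_finrank_ker Aᵀ.mulVecLin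
  rw [h1]
  have h3 : Aᵀ.rank = A.rank := Matrix.rank_transpose A
  rw [Matrix.rank] at h3
  rw [h3] at h2
  simp only [Module.finrank_pi, Fintype.card_fin] at h2
  omega

theorem dim_twistedCentralizer_zero {F : Type*} [Field F] {n : ℕ} (hn : 0 < n)
    (A : Matrix (Fin n) (Fin n) F) (k₀ : ℕ)
    (hk : k₀ = finrank F (LinearMap.ker A.vecMulLinear)) :
    finrank F (twistedCentralizer A 0) = k₀ * n ∧
    (A ≠ 0 → finrank F (twistedCentralizer A 0) ≤ n * (n - 1) ∧
      ∀ B ∈ twistedCentralizer A 0, ¬ IsUnit B) := by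
  have hker : finrank F (LinearMap.ker A.mulVecLin) = n - A.rank := by
    have h2 := LinearMap.finrank_range_add_finrank_ker A.mulVecLin
    rw [show finrank F (LinearMap.range A.mulVecLin) = A.rank from rfl] at h2
    simp only [Module.finrank_pi, Fintype.card_fin] at h2
    omega
  have hmain : finrank F (twistedCentralizer A 0) = k₀ * n := by
    rw [(twistedEquiv A).finrank_eq, hk, finrank_ker_vecMulLinear]
    simp [Module.finrank_pi_fintype, hker, Nat.mul_comm]
  refine ⟨hmain, fun hA => ⟨?_, ?_⟩⟩
  · have hrank : 0 < A.rank := by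
      rcases Nat.eq_zero_or_pos A.rank with h0 | h0
      · exfalso
        apply hA
        have hbot : LinearMap.range A.mulVecLin = ⊥ :=
          Submodule.finrank_eq_zero.mp h0
        have hz : A.mulVecLin = 0 := LinearMap.range_eq_bot.mp hbot
        have heq : Matrix.toLin' A = Matrix.toLin' 0 := by
          rw [Matrix.toLin'_apply', Matrix.toLin'_apply', hz]
          simp
        exact Matrix.toLin'.injective heq
      · exact h0
    have hk0 : k₀ ≤ n - 1 := by
      rw [hk, finrank_ker_vecMulLinear]
      omega
    rw [hmain]
    calc k₀ * n ≤ (n - 1) * n := Nat.mul_le_mul_right n hk0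
    _ = n * (n - 1) := Nat.mul_comm _ _
  · intro B hB hU
    apply hA
    have hAB : A * B = 0 := (mem_twistedCentralizer_zero A B).mp hB
    obtain ⟨u, rfl⟩ := hU
    calc A = A * ↑u * ↑u⁻¹ := (Units.mul_inv_cancel_right A u).symm
    _ = 0 := by rw [hAB, zero_mul]
end

section
/- Let F be a field, λ ∈ F with λ ≠ 0, and let A ∈ F^{n×n} be the block diagonal matrix diag(A₁, A₂) where A₁ ∈ F^{m×m} is nilpotent and A₂ ∈ F^{(n−m)×(n−m)} is invertible. Then C_F(A,λ) is isomorphic as an F-vector space to C_F(A₁,λ) ⊕ C_F(A₂,λ); in particular dim C_F(A,λ) = dim C_F(A₁,λ) + dim C_F(A₂,λ). -/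
open Matrix Module

lemma mem_twistedCentralizer {F : Type*} [Field F] {m : Type*} [Fintype m] [DecidableEq m]
    {A B : Matrix m m F} {lam : F} :
    B ∈ twistedCentralizer A lam ↔ A * B = lam • (B * A) := by
  simp [twistedCentralizer, LinearMap.mem_ker, LinearMap.sub_apply, sub_eq_zero,
    LinearMap.mulLeft_apply, LinearMap.mulRight_apply]

section aux
variable {F : Type*} [Field F] {m k : ℕ} {lam : F}

lemma aux_pow1 (A₁ : Matrix (Fin m) (Fin m) F) (A₂ : Matrix (Fin k) (Fin k) F)
    (C : Matrix (Fin m) (Fin k) F) (hC : A₁ * C = lam • (C * A₂)) (j : ℕ) :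
    A₁ ^ j * C = lam ^ j • (C * A₂ ^ j) := by
  induction j with
  | zero => simp
  | succ n ih =>
    calc A₁ ^ (n + 1) * C = A₁ ^ n * (A₁ * C) := by rw [pow_succ, Matrix.mul_assoc]
    _ = A₁ ^ n * (lam • (C * A₂)) := by rw [hC]
    _ = lam • (A₁ ^ n * C * A₂) := by rw [Matrix.mul_smul, Matrix.mul_assoc]
    _ = lam • ((lam ^ n • (C * A₂ ^ n)) * A₂) := by rw [ih]
    _ = lam ^ (n + 1) • (C * A₂ ^ (n + 1)) := by
        rw [Matrix.smul_mul, smul_smul, Matrix.mul_assoc, ← pow_succ, ← pow_succ']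

lemma aux_pow2 (A₁ : Matrix (Fin m) (Fin m) F) (A₂ : Matrix (Fin k) (Fin k) F)
    (C : Matrix (Fin k) (Fin m) F) (hC : A₂ * C = lam • (C * A₁)) (j : ℕ) :
    A₂ ^ j * C = lam ^ j • (C * A₁ ^ j) := by
  induction j with
  | zero => simp
  | succ n ih =>
    calc A₂ ^ (n + 1) * C = A₂ ^ n * (A₂ * C) := by rw [pow_succ, Matrix.mul_assoc]
    _ = A₂ ^ n * (lam • (C * A₁)) := by rw [hC]
    _ = lam • (A₂ ^ n * C * A₁) := by rw [Matrix.mul_smul, Matrix.mul_assoc]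
    _ = lam • ((lam ^ n • (C * A₁ ^ n)) * A₁) := by rw [ih]
    _ = lam ^ (n + 1) • (C * A₁ ^ (n + 1)) := by
        rw [Matrix.smul_mul, smul_smul, Matrix.mul_assoc, ← pow_succ, ← pow_succ']

lemma aux_zero1 (hlam : lam ≠ 0) (A₁ : Matrix (Fin m) (Fin m) F) (A₂ : Matrix (Fin k) (Fin k) F)
    (h1 : IsNilpotent A₁) (h2 : IsUnit A₂)
    (C : Matrix (Fin m) (Fin k) F) (hC : A₁ * C = lam • (C * A₂)) : C = 0 := by
  obtain ⟨r, hr⟩ := h1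
  have key := aux_pow1 A₁ A₂ C hC r
  rw [hr, Matrix.zero_mul] at key
  have h3 : C * A₂ ^ r = 0 := by
    rcases smul_eq_zero.mp key.symm with h | h
    · exact absurd h (pow_ne_zero _ hlam)
    · exact h
  obtain ⟨u, hu⟩ := h2.pow r
  have : C * (u : Matrix (Fin k) (Fin k) F) * (↑u⁻¹ : Matrix (Fin k) (Fin k) F) = 0 := by
    rw [hu, h3, Matrix.zero_mul]
  rwa [Matrix.mul_assoc, u.mul_inv, Matrix.mul_one] at this

lemma aux_zero2 (hlam : lam ≠ 0) (A₁ : Matrix (Fin m) (Fin m) F) (A₂ : Matrix (Fin k) (Fin k) F)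
    (h1 : IsNilpotent A₁) (h2 : IsUnit A₂)
    (C : Matrix (Fin k) (Fin m) F) (hC : A₂ * C = lam • (C * A₁)) : C = 0 := by
  obtain ⟨r, hr⟩ := h1
  have key := aux_pow2 A₁ A₂ C hC r
  rw [hr, Matrix.mul_zero, smul_zero] at key
  obtain ⟨u, hu⟩ := h2.pow r
  have : (↑u⁻¹ : Matrix (Fin k) (Fin k) F) * ((u : Matrix (Fin k) (Fin k) F) * C) = 0 := by
    rw [hu, key, Matrix.mul_zero]
  rwa [← Matrix.mul_assoc, u.inv_mul, Matrix.one_mul] at this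

/-- Block equations. -/
lemma block_eqs (A₁ : Matrix (Fin m) (Fin m) F) (A₂ : Matrix (Fin k) (Fin k) F)
    (B : Matrix (Fin m ⊕ Fin k) (Fin m ⊕ Fin k) F)
    (hB : Matrix.fromBlocks A₁ 0 0 A₂ * B = lam • (B * Matrix.fromBlocks A₁ 0 0 A₂)) :
    A₁ * B.toBlocks₁₁ = lam • (B.toBlocks₁₁ * A₁) ∧
    A₁ * B.toBlocks₁₂ = lam • (B.toBlocks₁₂ * A₂) ∧
    A₂ * B.toBlocks₂₁ = lam • (B.toBlocks₂₁ * A₁) ∧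
    A₂ * B.toBlocks₂₂ = lam • (B.toBlocks₂₂ * A₂) := by
  rw [← Matrix.fromBlocks_toBlocks B, Matrix.fromBlocks_multiply, Matrix.fromBlocks_multiply,
    Matrix.fromBlocks_smul] at hB
  simp only [Matrix.zero_mul, Matrix.mul_zero, add_zero, zero_add] at hB
  refine ⟨?_, ?_, ?_, ?_⟩
  · simpa using congrArg Matrix.toBlocks₁₁ hB
  · simpa using congrArg Matrix.toBlocks₁₂ hB
  · simpa using congrArg Matrix.toBlocks₂₁ hB
  · simpa using congrArg Matrix.toBlocks₂₂ hB

end aux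

theorem twistedCentralizer_blockDiag_nilpotent_invertible {F : Type*} [Field F] {m k : ℕ}
    (lam : F) (hlam : lam ≠ 0)
    (A₁ : Matrix (Fin m) (Fin m) F) (A₂ : Matrix (Fin k) (Fin k) F)
    (h1 : IsNilpotent A₁) (h2 : IsUnit A₂) :
    Nonempty ((twistedCentralizer (Matrix.fromBlocks A₁ 0 0 A₂) lam) ≃ₗ[F]
      (twistedCentralizer A₁ lam × twistedCentralizer A₂ lam)) ∧
    finrank F (twistedCentralizer (Matrix.fromBlocks A₁ 0 0 A₂) lam) =
      finrank F (twistedCentralizer A₁ lam) + finrank F (twistedCentralizer A₂ lam) := by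
  set A := Matrix.fromBlocks A₁ 0 0 A₂ with hA
  -- raw linear maps
  let p₁₁ : Matrix (Fin m ⊕ Fin k) (Fin m ⊕ Fin k) F →ₗ[F] Matrix (Fin m) (Fin m) F :=
    { toFun := Matrix.toBlocks₁₁
      map_add' := fun X Y => by ext i j; simp [Matrix.toBlocks₁₁]
      map_smul' := fun c X => by ext i j; simp [Matrix.toBlocks₁₁] }
  let p₂₂ : Matrix (Fin m ⊕ Fin k) (Fin m ⊕ Fin k) F →ₗ[F] Matrix (Fin k) (Fin k) F :=
    { toFun := Matrix.toBlocks₂₂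
      map_add' := fun X Y => by ext i j; simp [Matrix.toBlocks₂₂]
      map_smul' := fun c X => by ext i j; simp [Matrix.toBlocks₂₂] }
  let q : Matrix (Fin m) (Fin m) F × Matrix (Fin k) (Fin k) F →ₗ[F]
      Matrix (Fin m ⊕ Fin k) (Fin m ⊕ Fin k) F :=
    { toFun := fun p => Matrix.fromBlocks p.1 0 0 p.2
      map_add' := fun X Y => by
        simp [Matrix.fromBlocks_add]
      map_smul' := fun c X => by
        simp [Matrix.fromBlocks_smul] }
  have hf₁ : ∀ B : twistedCentralizer A lam,
      (p₁₁ ((twistedCentralizer A lam).subtype B)) ∈ twistedCentralizer A₁ lam := by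
    intro B
    have := (block_eqs A₁ A₂ B.1 (mem_twistedCentralizer.mp B.2)).1
    exact mem_twistedCentralizer.mpr this
  have hf₂ : ∀ B : twistedCentralizer A lam,
      (p₂₂ ((twistedCentralizer A lam).subtype B)) ∈ twistedCentralizer A₂ lam := by
    intro B
    have := (block_eqs A₁ A₂ B.1 (mem_twistedCentralizer.mp B.2)).2.2.2
    exact mem_twistedCentralizer.mpr this
  let f : twistedCentralizer A lam →ₗ[F]
      twistedCentralizer A₁ lam × twistedCentralizer A₂ lam :=
    LinearMap.prod
      (LinearMap.codRestrict _ (p₁₁.comp (twistedCentralizer A lam).subtype) hf₁)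
      (LinearMap.codRestrict _ (p₂₂.comp (twistedCentralizer A lam).subtype) hf₂)
  have hg : ∀ p : twistedCentralizer A₁ lam × twistedCentralizer A₂ lam,
      (q ((p.1.1, p.2.1))) ∈ twistedCentralizer A lam := by
    rintro ⟨⟨B₁, hB₁⟩, ⟨B₂, hB₂⟩⟩
    rw [mem_twistedCentralizer] at hB₁ hB₂ ⊢
    simp only [q, hA, LinearMap.coe_mk, AddHom.coe_mk]
    rw [Matrix.fromBlocks_multiply, Matrix.fromBlocks_multiply, Matrix.fromBlocks_smul]
    simp [hB₁, hB₂]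
  let g : twistedCentralizer A₁ lam × twistedCentralizer A₂ lam →ₗ[F]
      twistedCentralizer A lam :=
    LinearMap.codRestrict _
      (q.comp (LinearMap.prodMap (twistedCentralizer A₁ lam).subtype
        (twistedCentralizer A₂ lam).subtype)) (fun p => hg p)
  have hfg : f.comp g = LinearMap.id := by
    apply LinearMap.ext
    rintro ⟨⟨B₁, hB₁⟩, ⟨B₂, hB₂⟩⟩
    refine Prod.ext (Subtype.ext ?_) (Subtype.ext ?_) <;>
      (simp [f, g, p₁₁, p₂₂, q, Matrix.toBlocks_fromBlocks₁₁, Matrix.toBlocks_fromBlocks₂₂]; rfl)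
  have hgf : g.comp f = LinearMap.id := by
    apply LinearMap.ext
    intro B
    obtain ⟨eq11, eq12, eq21, eq22⟩ := block_eqs A₁ A₂ B.1 (mem_twistedCentralizer.mp B.2)
    have h12 : B.1.toBlocks₁₂ = 0 := aux_zero1 hlam A₁ A₂ h1 h2 _ eq12
    have h21 : B.1.toBlocks₂₁ = 0 := aux_zero2 hlam A₁ A₂ h1 h2 _ eq21
    simp only [LinearMap.comp_apply, LinearMap.id_apply]
    apply Subtype.ext
    simp only [g, f, q, p₁₁, p₂₂, LinearMap.codRestrict_apply, LinearMap.comp_apply,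
      LinearMap.prod_apply, LinearMap.prodMap_apply, Submodule.coe_subtype, Pi.prod,
      LinearMap.coe_mk, AddHom.coe_mk]
    conv_rhs => rw [← Matrix.fromBlocks_toBlocks B.1, h12, h21]
    rfl
  let e : twistedCentralizer A lam ≃ₗ[F]
      twistedCentralizer A₁ lam × twistedCentralizer A₂ lam :=
    LinearEquiv.ofLinear f g hfg hgf
  refine ⟨⟨e⟩, ?_⟩
  rw [e.finrank_eq, Module.finrank_prod]
end

section
/- Let F be a field of prime characteristic p > 0, let λ ∈ F with λ ≠ 0, and let A ∈ F^{n×n}. Suppose the characteristic polynomial of A factors over F as c_A(t) = (t−α)^m · f(t) where f(α)·f(λα)·f(λ⁻¹α) ≠ 0. Then A is conjugate over F to a block diagonal matrix diag(A₁, A₂) where A₁ has characteristic polynomial (t−α)^m and A₂ has characteristic polynomial f(t), and C_F(A,λ) is isomorphic as an F-vector space to C_F(A₁,λ) ⊕ C_F(A₂,λ). -/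
open Matrix Module Polynomial

section Aux
variable {F : Type*} [Field F]

lemma mem_twistedCentralizer_iff {ι : Type*} [Fintype ι] [DecidableEq ι]
    {A B : Matrix ι ι F} {lam : F} :
    B ∈ twistedCentralizer A lam ↔ A * B = lam • (B * A) := by
  rw [twistedCentralizer, LinearMap.mem_ker, LinearMap.sub_apply, LinearMap.smul_apply,
    LinearMap.mulLeft_apply, LinearMap.mulRight_apply, sub_eq_zero]

lemma aeval_intertwine {ι κ : Type*} [Fintype ι] [DecidableEq ι] [Fintype κ] [DecidableEq κ]
    {A : Matrix ι ι F} {B : Matrix κ κ F} {Y : Matrix ι κ F}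
    (h : A * Y = Y * B) (q : F[X]) : aeval A q * Y = Y * aeval B q := by
  have hpow : ∀ i : ℕ, A ^ i * Y = Y * B ^ i := by
    intro i; induction i with
    | zero => simp
    | succ i ih => rw [pow_succ, pow_succ, Matrix.mul_assoc, h, ← Matrix.mul_assoc, ih, Matrix.mul_assoc]
  induction q using Polynomial.induction_on' with
  | add p q hp hq => rw [map_add, map_add, Matrix.add_mul, Matrix.mul_add, hp, hq]
  | monomial i c =>
      simp only [aeval_monomial, Algebra.algebraMap_eq_smul_one, smul_mul_assoc, one_mul]
      rw [Matrix.smul_mul, hpow i, Matrix.mul_smul]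

lemma commute_aeval {ι : Type*} [Fintype ι] [DecidableEq ι] (M : Matrix ι ι F) (p q : F[X]) :
    Commute (aeval M p) (aeval M q) := by
  rw [commute_iff_eq, ← _root_.map_mul, ← _root_.map_mul, mul_comm]

lemma isUnit_aeval_of_nilpotent_shift {ι : Type*} [Fintype ι] [DecidableEq ι]
    (M : Matrix ι ι F) (c : F) (hnil : IsNilpotent (M - c • (1 : Matrix ι ι F))) {q : F[X]}
    (hq : q.eval c ≠ 0) : IsUnit (aeval M q) := by
  obtain ⟨g, hg⟩ : (X - C c) ∣ (q - C (q.eval c)) := dvd_iff_isRoot.mpr (by simp [IsRoot])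
  have hq' : q = C (q.eval c) + (X - C c) * g := by rw [← hg]; ring
  have hMc : M - c • (1 : Matrix ι ι F) = aeval M (X - C c) := by
    simp [Algebra.algebraMap_eq_smul_one]
  have heq : aeval M q = algebraMap F (Matrix ι ι F) (q.eval c)
      + (M - c • (1 : Matrix ι ι F)) * aeval M g := by
    conv_lhs => rw [hq']
    rw [map_add, _root_.map_mul, aeval_C, ← hMc]
  rw [heq]
  have hnil2 : IsNilpotent ((M - c • (1 : Matrix ι ι F)) * aeval M g) := by
    have hcomm : Commute (M - c • (1 : Matrix ι ι F)) (aeval M g) := by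
      rw [hMc]; exact commute_aeval M _ _
    exact hcomm.isNilpotent_mul_right hnil
  have hu : IsUnit (algebraMap F (Matrix ι ι F) (q.eval c)) :=
    (Ne.isUnit hq).map (algebraMap F (Matrix ι ι F))
  exact hnil2.isUnit_add_left_of_commute hu (Algebra.commutes _ _).symm

lemma eval_charpoly_eq_det {ι : Type*} [Fintype ι] [DecidableEq ι] (M : Matrix ι ι F) (c : F) :
    M.charpoly.eval c = (c • (1 : Matrix ι ι F) - M).det := by
  rw [Matrix.charpoly, ← Polynomial.coe_evalRingHom, RingHom.map_det]
  congr 1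
  ext i j
  by_cases h : i = j
  · subst h
    simp [charmatrix_apply_eq, Matrix.one_apply]
  · simp [charmatrix_apply_ne _ _ _ h, Matrix.one_apply_ne h]

lemma charpoly_eq_pow_of_nilpotent_shift {ι : Type*} [Fintype ι] [DecidableEq ι]
    (M : Matrix ι ι F) (c : F) (h : IsNilpotent (M - c • (1 : Matrix ι ι F))) :
    M.charpoly = (X - C c) ^ (Fintype.card ι) := by
  set N := M - c • (1 : Matrix ι ι F) with hNdef
  have h1 : N.charpoly = X ^ Fintype.card ι :=
    sub_eq_zero.mp (Matrix.isNilpotent_charpoly_sub_pow_of_isNilpotent h).eq_zero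
  let τ : F[X] →+* F[X] := eval₂RingHom Polynomial.C (X - C c)
  have hmap : τ.mapMatrix (charmatrix N) = charmatrix M := by
    refine Matrix.ext fun i j => ?_
    rw [RingHom.mapMatrix_apply]
    by_cases hij : i = j
    · subst hij
      simp only [Matrix.map_apply, charmatrix_apply_eq, hNdef, Matrix.sub_apply,
        Matrix.smul_apply, Matrix.one_apply_eq, smul_eq_mul, mul_one, τ,
        coe_eval₂RingHom, eval₂_sub, eval₂_X, eval₂_C, map_sub]
      ring
    · simp only [Matrix.map_apply, charmatrix_apply_ne _ _ _ hij, hNdef, Matrix.sub_apply,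
        Matrix.smul_apply, Matrix.one_apply_ne hij, smul_eq_mul, mul_zero, sub_zero, τ,
        coe_eval₂RingHom, eval₂_neg, eval₂_C]
  have h2 : M.charpoly = τ N.charpoly := by
    rw [Matrix.charpoly, Matrix.charpoly, RingHom.map_det, hmap]
  rw [h2, h1, map_pow]
  simp [τ]
/-- transfer of twisted centralizers along a multiplicative linear equivalence -/
noncomputable def twistedConjEquiv {ι κ : Type*} [Fintype ι] [DecidableEq ι] [Fintype κ]
    [DecidableEq κ] (σ : Matrix ι ι F ≃ₗ[F] Matrix κ κ F)
    (hm : ∀ X Y : Matrix ι ι F, σ (X * Y) = σ X * σ Y)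
    (A : Matrix ι ι F) (lam : F) :
    twistedCentralizer A lam ≃ₗ[F] twistedCentralizer (σ A) lam := by
  have hmem : ∀ B, B ∈ twistedCentralizer A lam → σ B ∈ twistedCentralizer (σ A) lam := by
    intro B hB
    rw [mem_twistedCentralizer_iff] at hB ⊢
    rw [← hm, hB, σ.map_smul, hm]
  have hmem' : ∀ B, B ∈ twistedCentralizer (σ A) lam → σ.symm B ∈ twistedCentralizer A lam := by
    intro B hB
    rw [mem_twistedCentralizer_iff] at hB ⊢
    apply σ.injective
    rw [hm, σ.apply_symm_apply, hB, σ.map_smul, hm, σ.apply_symm_apply]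
  exact
  { toFun := fun B => ⟨σ B, hmem B B.2⟩
    invFun := fun B => ⟨σ.symm B, hmem' B B.2⟩
    left_inv := fun B => Subtype.ext (σ.symm_apply_apply B)
    right_inv := fun B => Subtype.ext (σ.apply_symm_apply B)
    map_add' := fun B C => Subtype.ext (map_add σ _ _)
    map_smul' := fun c B => Subtype.ext (map_smul σ _ _) }

/-- conjugation by a unit as a linear equivalence -/
noncomputable def unitConjLinEquiv {ι : Type*} [Fintype ι] [DecidableEq ι]
    (P : (Matrix ι ι F)ˣ) : Matrix ι ι F ≃ₗ[F] Matrix ι ι F where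
  toFun B := ↑P * B * ↑P⁻¹
  invFun B := ↑P⁻¹ * B * ↑P
  map_add' B C := by
    show (↑P : Matrix ι ι F) * (B + C) * (↑P⁻¹ : Matrix ι ι F) = (↑P : Matrix ι ι F) * B * (↑P⁻¹ : Matrix ι ι F) + (↑P : Matrix ι ι F) * C * (↑P⁻¹ : Matrix ι ι F)
    rw [Matrix.mul_add, Matrix.add_mul]
  map_smul' c B := by
    show (↑P : Matrix ι ι F) * (c • B) * (↑P⁻¹ : Matrix ι ι F) = c • ((↑P : Matrix ι ι F) * B * (↑P⁻¹ : Matrix ι ι F))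
    rw [Matrix.mul_smul, Matrix.smul_mul]
  left_inv B := by
    show (↑P⁻¹ : Matrix ι ι F) * ((↑P : Matrix ι ι F) * B * (↑P⁻¹ : Matrix ι ι F)) * (↑P : Matrix ι ι F) = B
    simp only [Matrix.mul_assoc]
    rw [Units.inv_mul, Matrix.mul_one, Units.inv_mul_cancel_left]
  right_inv B := by
    show (↑P : Matrix ι ι F) * ((↑P⁻¹ : Matrix ι ι F) * B * (↑P : Matrix ι ι F)) * (↑P⁻¹ : Matrix ι ι F) = B
    simp only [Matrix.mul_assoc]
    rw [Units.mul_inv, Matrix.mul_one, Units.mul_inv_cancel_left]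

lemma unitConjLinEquiv_mul {ι : Type*} [Fintype ι] [DecidableEq ι]
    (P : (Matrix ι ι F)ˣ) (X Y : Matrix ι ι F) :
    unitConjLinEquiv P (X * Y) = unitConjLinEquiv P X * unitConjLinEquiv P Y := by
  show (↑P : Matrix ι ι F) * (X * Y) * (↑P⁻¹ : Matrix ι ι F) = ((↑P : Matrix ι ι F) * X * (↑P⁻¹ : Matrix ι ι F)) * ((↑P : Matrix ι ι F) * Y * (↑P⁻¹ : Matrix ι ι F))
  simp only [Matrix.mul_assoc, Units.inv_mul_cancel_left]

lemma reindexLinearEquiv_mul' {ι κ : Type*} [Fintype ι] [DecidableEq ι] [Fintype κ]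
    [DecidableEq κ] (e : ι ≃ κ) (X Y : Matrix ι ι F) :
    Matrix.reindexLinearEquiv F F e e (X * Y) =
      Matrix.reindexLinearEquiv F F e e X * Matrix.reindexLinearEquiv F F e e Y :=
  (Matrix.reindexLinearEquiv_mul F F e e e X Y).symm

lemma mem_twisted_fromBlocks_iff {ι κ : Type*} [Fintype ι] [DecidableEq ι] [Fintype κ]
    [DecidableEq κ] (A₁ : Matrix ι ι F) (A₂ : Matrix κ κ F) (lam : F)
    (h12 : ∀ Y : Matrix ι κ F, A₁ * Y = lam • (Y * A₂) → Y = 0)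
    (h21 : ∀ Y : Matrix κ ι F, A₂ * Y = lam • (Y * A₁) → Y = 0)
    (B : Matrix (ι ⊕ κ) (ι ⊕ κ) F) :
      B ∈ twistedCentralizer (Matrix.fromBlocks A₁ 0 0 A₂) lam ↔
      (B.toBlocks₁₁ ∈ twistedCentralizer A₁ lam ∧ B.toBlocks₂₂ ∈ twistedCentralizer A₂ lam ∧
        B.toBlocks₁₂ = 0 ∧ B.toBlocks₂₁ = 0) := by
  rw [mem_twistedCentralizer_iff, mem_twistedCentralizer_iff, mem_twistedCentralizer_iff]
  conv_lhs => rw [← Matrix.fromBlocks_toBlocks B]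
  rw [Matrix.fromBlocks_multiply, Matrix.fromBlocks_multiply, Matrix.fromBlocks_smul,
    Matrix.fromBlocks_inj]
  simp only [Matrix.zero_mul, Matrix.mul_zero, add_zero, zero_add]
  constructor
  · rintro ⟨h11, h12', h21', h22⟩
    exact ⟨h11, h22, h12 _ h12', h21 _ h21'⟩
  · rintro ⟨h11, h22, h120, h210⟩
    refine ⟨h11, by rw [h120]; simp, by rw [h210]; simp, h22⟩

/-- the block splitting equivalence -/
noncomputable def twistedBlockEquiv {ι κ : Type*} [Fintype ι] [DecidableEq ι] [Fintype κ]
    [DecidableEq κ] (A₁ : Matrix ι ι F) (A₂ : Matrix κ κ F) (lam : F)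
    (h12 : ∀ Y : Matrix ι κ F, A₁ * Y = lam • (Y * A₂) → Y = 0)
    (h21 : ∀ Y : Matrix κ ι F, A₂ * Y = lam • (Y * A₁) → Y = 0) :
    (twistedCentralizer (Matrix.fromBlocks A₁ 0 0 A₂) lam) ≃ₗ[F]
      (twistedCentralizer A₁ lam × twistedCentralizer A₂ lam) where
  toFun B := (⟨(B.1 : Matrix (ι ⊕ κ) (ι ⊕ κ) F).toBlocks₁₁,
      ((mem_twisted_fromBlocks_iff A₁ A₂ lam h12 h21 B.1).mp B.2).1⟩,
    ⟨(B.1 : Matrix (ι ⊕ κ) (ι ⊕ κ) F).toBlocks₂₂,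
      ((mem_twisted_fromBlocks_iff A₁ A₂ lam h12 h21 B.1).mp B.2).2.1⟩)
  invFun Bp := ⟨Matrix.fromBlocks Bp.1.1 0 0 Bp.2.1,
    (mem_twisted_fromBlocks_iff A₁ A₂ lam h12 h21 _).mpr
      ⟨by simpa using Bp.1.2, by simpa using Bp.2.2, by simp, by simp⟩⟩
  left_inv B := by
    have h := (mem_twisted_fromBlocks_iff A₁ A₂ lam h12 h21 B.1).mp B.2
    apply Subtype.ext
    show Matrix.fromBlocks _ 0 0 _ = (B.1 : Matrix (ι ⊕ κ) (ι ⊕ κ) F)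
    conv_rhs => rw [← Matrix.fromBlocks_toBlocks (B.1 : Matrix (ι ⊕ κ) (ι ⊕ κ) F)]
    rw [h.2.2.1, h.2.2.2]
  right_inv Bp := by
    refine Prod.ext (Subtype.ext ?_) (Subtype.ext ?_) <;> simp
  map_add' B C := by
    refine Prod.ext (Subtype.ext ?_) (Subtype.ext ?_) <;> rfl
  map_smul' c B := by
    refine Prod.ext (Subtype.ext ?_) (Subtype.ext ?_) <;> rfl



lemma coe_restrict_aeval {M : Type*} [AddCommGroup M] [Module F M] {K : Submodule F M}
    (φ : M →ₗ[F] M) (h : ∀ x ∈ K, φ x ∈ K) (q : F[X]) (x : K) :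
    ((aeval (φ.restrict h) q) x : M) = aeval φ q (x : M) := by
  induction q using Polynomial.induction_on' with
  | add p q hp hq => simp [hp, hq]
  | monomial i c =>
    have hpow : ∀ (j : ℕ) (y : K), ((((φ.restrict h) ^ j) y : K) : M) = (φ ^ j) (y : M) := by
      intro j; induction j with
      | zero => intro y; simp
      | succ j ih =>
        intro y
        rw [pow_succ', pow_succ', Module.End.mul_apply, Module.End.mul_apply,
          LinearMap.restrict_coe_apply, ih]
    simp only [aeval_monomial, Module.End.mul_apply, Module.algebraMap_end_apply,
      LinearMap.smul_apply, Submodule.coe_smul, hpow]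

lemma toMatrix_basis_map {M₁ M₂ : Type*} [AddCommGroup M₁] [Module F M₁] [AddCommGroup M₂]
    [Module F M₂] {ι : Type*} [Fintype ι] [DecidableEq ι] (b : Basis ι F M₁)
    (eqv : M₁ ≃ₗ[F] M₂) (φ : M₂ →ₗ[F] M₂) :
    LinearMap.toMatrix (b.map eqv) (b.map eqv) φ =
      LinearMap.toMatrix b b (eqv.symm.conj φ) := by
  ext i j
  simp [LinearMap.toMatrix_apply, LinearEquiv.conj_apply]

lemma toMatrix_basis_reindex {M₁ : Type*} [AddCommGroup M₁] [Module F M₁]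
    {ι κ : Type*} [Fintype ι] [DecidableEq ι] [Fintype κ] [DecidableEq κ]
    (b : Basis ι F M₁) (e : ι ≃ κ) (φ : M₁ →ₗ[F] M₁) :
    LinearMap.toMatrix (b.reindex e) (b.reindex e) φ =
      Matrix.reindex e e (LinearMap.toMatrix b b φ) := by
  ext i j
  simp [LinearMap.toMatrix_apply, Basis.repr_reindex_apply]

lemma exists_conj_eq {n : ℕ} (φ : (Fin n → F) →ₗ[F] (Fin n → F))
    {K₁ K₂ : Submodule F (Fin n → F)} (hcompl : IsCompl K₁ K₂)
    {ι₁ ι₂ : Type} [Fintype ι₁] [DecidableEq ι₁] [Fintype ι₂] [DecidableEq ι₂]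
    (b₁ : Basis ι₁ F K₁) (b₂ : Basis ι₂ F K₂) (e : (ι₁ ⊕ ι₂) ≃ Fin n)
    (h₁ : ∀ x ∈ K₁, φ x ∈ K₁) (h₂ : ∀ x ∈ K₂, φ x ∈ K₂) :
    ∃ P : (Matrix (Fin n) (Fin n) F)ˣ,
      (↑P : Matrix (Fin n) (Fin n) F) * (LinearMap.toMatrix' φ) * (↑P⁻¹ : Matrix (Fin n) (Fin n) F) =
        Matrix.reindex e e (Matrix.fromBlocks (LinearMap.toMatrix b₁ b₁ (φ.restrict h₁)) 0 0
          (LinearMap.toMatrix b₂ b₂ (φ.restrict h₂))) := by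
  classical
  set pe := Submodule.prodEquivOfIsCompl K₁ K₂ hcompl
  have hψ : (φ.restrict h₁).prodMap (φ.restrict h₂) = pe.symm.conj φ := by
    set_option synthInstance.maxHeartbeats 100000 in
    apply (b₁.prod b₂).ext
    simp only [Basis.prod_apply, LinearMap.coe_inl, LinearMap.coe_inr, LinearMap.prodMap_apply,
      LinearEquiv.conj_apply, LinearEquiv.symm_symm, Submodule.coe_prodEquivOfIsCompl,
      LinearMap.coe_comp, LinearEquiv.coe_coe, Function.comp_apply, LinearMap.coprod_apply,
      Submodule.coe_subtype, map_add, Sum.forall, Sum.elim_inl, map_zero,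
      ZeroMemClass.coe_zero, add_zero, LinearEquiv.eq_symm_apply, and_self,
      Submodule.coe_prodEquivOfIsCompl', LinearMap.restrict_coe_apply, implies_true,
      Sum.elim_inr, zero_add, pe]
  have hblock : LinearMap.toMatrix (b₁.prod b₂) (b₁.prod b₂)
      ((φ.restrict h₁).prodMap (φ.restrict h₂)) =
      Matrix.fromBlocks (LinearMap.toMatrix b₁ b₁ (φ.restrict h₁)) 0 0
        (LinearMap.toMatrix b₂ b₂ (φ.restrict h₂)) :=
    LinearMap.toMatrix_prodMap b₁ b₂ _ _
  set c : Basis (Fin n) F (Fin n → F) := (((b₁.prod b₂).map pe).reindex e) with hc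
  have hcc : LinearMap.toMatrix c c φ =
      Matrix.reindex e e (Matrix.fromBlocks (LinearMap.toMatrix b₁ b₁ (φ.restrict h₁)) 0 0
        (LinearMap.toMatrix b₂ b₂ (φ.restrict h₂))) := by
    rw [hc, toMatrix_basis_reindex, toMatrix_basis_map, ← hψ, hblock]
  set s : Basis (Fin n) F (Fin n → F) := Pi.basisFun F (Fin n) with hs
  have hA : LinearMap.toMatrix s s φ = LinearMap.toMatrix' φ := by
    rw [hs, LinearMap.toMatrix_eq_toMatrix']
  refine ⟨⟨c.toMatrix s, s.toMatrix c, Basis.toMatrix_mul_toMatrix_flip c s,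
    Basis.toMatrix_mul_toMatrix_flip s c⟩, ?_⟩
  show c.toMatrix s * LinearMap.toMatrix' φ * s.toMatrix c = _
  rw [← hA, basis_toMatrix_mul_linearMap_toMatrix_mul_basis_toMatrix, hcc]

lemma aeval_toMatrix_eq_zero {M : Type*} [AddCommGroup M] [Module F M] {ι : Type*}
    [Fintype ι] [DecidableEq ι] (b : Basis ι F M) (ψ : M →ₗ[F] M) {q : F[X]}
    (hq : aeval ψ q = 0) : aeval (LinearMap.toMatrix b b ψ) q = 0 := by
  have h := Polynomial.aeval_algHom_apply (LinearMap.toMatrixAlgEquiv b : (M →ₗ[F] M) →ₐ[F] Matrix ι ι F) ψ q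
  rw [hq, map_zero] at h
  have h2 : (LinearMap.toMatrixAlgEquiv b : (M →ₗ[F] M) →ₐ[F] Matrix ι ι F) ψ
      = LinearMap.toMatrix b b ψ := rfl
  rwa [h2] at h

lemma charpoly_units_conj {ι : Type*} [Fintype ι] [DecidableEq ι] (P : (Matrix ι ι F)ˣ)
    (A : Matrix ι ι F) :
    ((↑P : Matrix ι ι F) * A * (↑P⁻¹ : Matrix ι ι F)).charpoly = A.charpoly := by
  let Cm : Matrix ι ι F →+* Matrix ι ι F[X] := (Polynomial.C (R := F)).mapMatrix
  have hPP : Cm ↑P * Cm ↑P⁻¹ = 1 := by rw [← _root_.map_mul, Units.mul_inv, _root_.map_one]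
  have hch : charmatrix ((↑P : Matrix ι ι F) * A * (↑P⁻¹ : Matrix ι ι F)) =
      Cm ↑P * charmatrix A * Cm ↑P⁻¹ := by
    rw [charmatrix, charmatrix, Matrix.mul_sub, Matrix.sub_mul]
    congr 1
    · have hs : ∀ B : Matrix ι ι F[X], Matrix.scalar ι (X : F[X]) * B = B * Matrix.scalar ι X :=
        fun B => (Matrix.scalar_commute (X : F[X]) (fun r => Commute.all _ _) B).eq
      rw [← hs, Matrix.mul_assoc, hPP, Matrix.mul_one]
    · show (Polynomial.C (R := F)).mapMatrix _ = _
      rw [_root_.map_mul, _root_.map_mul]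
  rw [Matrix.charpoly, hch, det_mul, det_mul, Matrix.charpoly, mul_right_comm,
    ← det_mul, hPP, det_one, one_mul]

end Aux

theorem twistedCentralizer_primary_decomposition {F : Type*} [Field F] {p : ℕ} [Fact p.Prime]
    [CharP F p] {n : ℕ} (lam α : F) (hlam : lam ≠ 0)
    (A : Matrix (Fin n) (Fin n) F) (m : ℕ) (f : F[X])
    (hfac : A.charpoly = (X - C α) ^ m * f)
    (hf : f.eval α * f.eval (lam * α) * f.eval (lam⁻¹ * α) ≠ 0) :
    ∃ (k : ℕ) (A₁ : Matrix (Fin m) (Fin m) F) (A₂ : Matrix (Fin k) (Fin k) F)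
      (e : (Fin m ⊕ Fin k) ≃ Fin n) (P : (Matrix (Fin n) (Fin n) F)ˣ),
      (P : Matrix (Fin n) (Fin n) F) * A * (↑P⁻¹ : Matrix (Fin n) (Fin n) F) =
        Matrix.reindex e e (Matrix.fromBlocks A₁ 0 0 A₂) ∧
      A₁.charpoly = (X - C α) ^ m ∧ A₂.charpoly = f ∧
      Nonempty ((twistedCentralizer A lam) ≃ₗ[F]
        (twistedCentralizer A₁ lam × twistedCentralizer A₂ lam)) := by
  classical
  have hfα : f.eval α ≠ 0 := fun h => hf (by rw [h]; ring)
  have hfl : f.eval (lam * α) ≠ 0 := fun h => hf (by rw [h]; ring)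
  have hfli : f.eval (lam⁻¹ * α) ≠ 0 := fun h => hf (by rw [h]; ring)
  set g : F[X] := (X - C α) ^ m with hgdef
  have hXsubC : (X - C α : F[X]) ≠ 0 := Polynomial.X_sub_C_ne_zero α
  have hndvd : ¬ (X - C α) ∣ f := fun hdvd => hfα (dvd_iff_isRoot.mp hdvd)
  have hcop : IsCoprime g f :=
    ((Polynomial.prime_X_sub_C α).coprime_iff_not_dvd.mpr hndvd).pow_left
  set φ : (Fin n → F) →ₗ[F] (Fin n → F) := Matrix.toLinAlgEquiv' A with hφdef
  have hAφ : LinearMap.toMatrix' φ = A := LinearMap.toMatrixAlgEquiv'_toLinAlgEquiv' A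
  have haevalA : aeval A (g * f) = 0 := by rw [← hfac]; exact Matrix.aeval_self_charpoly A
  have haevalφ : aeval φ (g * f) = 0 := by
    have h := Polynomial.aeval_algHom_apply
      (Matrix.toLinAlgEquiv' (R := F) (n := Fin n)).toAlgHom A (g * f)
    rw [haevalA, map_zero] at h
    exact h
  set K₁ := LinearMap.ker (aeval φ g) with hK₁def
  set K₂ := LinearMap.ker (aeval φ f) with hK₂def
  have hsup : K₁ ⊔ K₂ = ⊤ := by
    rw [hK₁def, hK₂def, Polynomial.sup_ker_aeval_eq_ker_aeval_mul_of_coprime φ hcop, haevalφ]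
    exact LinearMap.ker_zero
  have hcompl : IsCompl K₁ K₂ :=
    ⟨Polynomial.disjoint_ker_aeval_of_isCoprime φ hcop, codisjoint_iff.mpr hsup⟩
  have hinv : ∀ (q : F[X]), ∀ x ∈ LinearMap.ker (aeval φ q), φ x ∈ LinearMap.ker (aeval φ q) := by
    intro q x hx
    rw [LinearMap.mem_ker] at hx ⊢
    have hc : aeval φ q * aeval φ (X : F[X]) = aeval φ (X : F[X]) * aeval φ q := by
      rw [← _root_.map_mul, ← _root_.map_mul, mul_comm]
    rw [aeval_X] at hc
    rw [← Module.End.mul_apply, hc, Module.End.mul_apply, hx, map_zero]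
  have h₁ : ∀ x ∈ K₁, φ x ∈ K₁ := hinv g
  have h₂ : ∀ x ∈ K₂, φ x ∈ K₂ := hinv f
  set φ₁ := φ.restrict h₁ with hφ₁def
  set φ₂ := φ.restrict h₂ with hφ₂def
  have haφ₁ : aeval φ₁ g = 0 := by
    apply LinearMap.ext
    intro x
    have hx : (aeval φ) g ↑x = 0 := LinearMap.mem_ker.mp x.2
    show (aeval φ₁ g) x = (0 : ↥K₁ →ₗ[F] ↥K₁) x
    rw [LinearMap.zero_apply]
    apply Subtype.ext
    rw [coe_restrict_aeval φ h₁ g x, ZeroMemClass.coe_zero]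
    exact hx
  have haφ₂ : aeval φ₂ f = 0 := by
    apply LinearMap.ext
    intro x
    have hx : (aeval φ) f ↑x = 0 := LinearMap.mem_ker.mp x.2
    show (aeval φ₂ f) x = (0 : ↥K₂ →ₗ[F] ↥K₂) x
    rw [LinearMap.zero_apply]
    apply Subtype.ext
    rw [coe_restrict_aeval φ h₂ f x, ZeroMemClass.coe_zero]
    exact hx
  set d₁ := Module.finrank F K₁ with hd₁def
  set d₂ := Module.finrank F K₂ with hd₂def
  have hsumd : d₁ + d₂ = n := by
    have h := Submodule.finrank_add_eq_of_isCompl hcompl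
    rwa [Module.finrank_fin_fun] at h
  set b₁' : Basis (Fin d₁) F K₁ := Module.finBasis F K₁ with hb₁'def
  set b₂' : Basis (Fin d₂) F K₂ := Module.finBasis F K₂ with hb₂'def
  set M₁ := LinearMap.toMatrix b₁' b₁' φ₁ with hM₁def
  set M₂ := LinearMap.toMatrix b₂' b₂' φ₂ with hM₂def
  have haM₁ : aeval M₁ g = 0 := aeval_toMatrix_eq_zero b₁' φ₁ haφ₁
  have haM₂ : aeval M₂ f = 0 := aeval_toMatrix_eq_zero b₂' φ₂ haφ₂
  have hnilM₁ : IsNilpotent (M₁ - α • (1 : Matrix (Fin d₁) (Fin d₁) F)) := by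
    refine ⟨m, ?_⟩
    have hh : (M₁ - α • (1 : Matrix (Fin d₁) (Fin d₁) F)) ^ m = aeval M₁ g := by
      rw [hgdef, map_pow, map_sub, aeval_X, aeval_C, Algebra.algebraMap_eq_smul_one]
    rw [hh, haM₁]
  have hchM₁ : M₁.charpoly = (X - C α) ^ d₁ := by
    have h := charpoly_eq_pow_of_nilpotent_shift M₁ α hnilM₁
    rwa [Fintype.card_fin] at h
  obtain ⟨P₀, hP₀⟩ := exists_conj_eq φ hcompl b₁' b₂' (finSumFinEquiv.trans (finCongr hsumd)) h₁ h₂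
  rw [hAφ] at hP₀
  have hprod : A.charpoly = M₁.charpoly * M₂.charpoly := by
    have h := _root_.charpoly_units_conj P₀ A
    rw [hP₀, Matrix.charpoly_reindex, Matrix.charpoly_fromBlocks_zero₁₂] at h
    exact h.symm
  have hcubed : (X - C α) ^ d₁ * M₂.charpoly = (X - C α) ^ m * f := by
    rw [← hchM₁, ← hprod, hfac]
  have hndvd₂ : ¬ (X - C α) ∣ M₂.charpoly := by
    intro hdvd
    have hroot : M₂.charpoly.eval α = 0 := dvd_iff_isRoot.mp hdvd
    rw [eval_charpoly_eq_det] at hroot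
    obtain ⟨g₂, hg₂⟩ : (X - C α) ∣ (f - C (f.eval α)) := dvd_iff_isRoot.mpr (by simp)
    have hfeq : f = C (f.eval α) + (X - C α) * g₂ := by rw [← hg₂]; ring
    have h0 : (0 : Matrix (Fin d₂) (Fin d₂) F) =
        (f.eval α) • (1 : Matrix (Fin d₂) (Fin d₂) F)
          + (M₂ - α • 1) * aeval M₂ g₂ := by
      rw [← haM₂]
      conv_lhs => rw [hfeq]
      rw [map_add, _root_.map_mul, aeval_C, map_sub, aeval_X, aeval_C,
        Algebra.algebraMap_eq_smul_one, Algebra.algebraMap_eq_smul_one]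
    have hprod0 : (M₂ - α • (1 : Matrix (Fin d₂) (Fin d₂) F)) * aeval M₂ g₂ =
        -((f.eval α) • (1 : Matrix (Fin d₂) (Fin d₂) F)) :=
      (neg_eq_of_add_eq_zero_right h0.symm).symm
    have hdet2 : (M₂ - α • (1 : Matrix (Fin d₂) (Fin d₂) F)).det * (aeval M₂ g₂).det ≠ 0 := by
      rw [← det_mul, hprod0, ← neg_smul, Matrix.det_smul, Matrix.det_one, mul_one]
      exact pow_ne_zero _ (neg_ne_zero.mpr hfα)
    have h3 : (M₂ - α • (1 : Matrix (Fin d₂) (Fin d₂) F)).det ≠ 0 := left_ne_zero_of_mul hdet2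
    apply h3
    have hne : α • (1 : Matrix (Fin d₂) (Fin d₂) F) - M₂ =
        -(M₂ - α • (1 : Matrix (Fin d₂) (Fin d₂) F)) := (neg_sub _ _).symm
    rw [hne, Matrix.det_neg] at hroot
    rcases mul_eq_zero.mp hroot with h | h
    · exact absurd h (pow_ne_zero _ (neg_ne_zero.mpr one_ne_zero))
    · exact h
  have hd₁m : d₁ = m := by
    have hdvd1 : (X - C α) ^ m ∣ (X - C α) ^ d₁ :=
      (Polynomial.prime_X_sub_C α).pow_dvd_of_dvd_mul_right m hndvd₂
        (by rw [hcubed]; exact dvd_mul_right _ _)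
    have hdvd2 : (X - C α) ^ d₁ ∣ (X - C α) ^ m :=
      (Polynomial.prime_X_sub_C α).pow_dvd_of_dvd_mul_right d₁ hndvd
        (by rw [← hcubed]; exact dvd_mul_right _ _)
    have hle1 := Polynomial.natDegree_le_of_dvd hdvd1 (pow_ne_zero _ hXsubC)
    have hle2 := Polynomial.natDegree_le_of_dvd hdvd2 (pow_ne_zero _ hXsubC)
    rw [Polynomial.natDegree_pow, Polynomial.natDegree_pow, Polynomial.natDegree_X_sub_C,
      mul_one, mul_one] at hle1 hle2
    omega
  have hchM₂ : M₂.charpoly = f := by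
    have h := hcubed
    rw [hd₁m] at h
    exact mul_left_cancel₀ (pow_ne_zero _ hXsubC) h
  -- final data
  set b₁ : Basis (Fin m) F K₁ := b₁'.reindex (finCongr hd₁m) with hb₁def
  set A₁ := LinearMap.toMatrix b₁ b₁ φ₁ with hA₁def
  have hsumd' : m + d₂ = n := by rw [← hd₁m]; exact hsumd
  set e : (Fin m ⊕ Fin d₂) ≃ Fin n := finSumFinEquiv.trans (finCongr hsumd') with hedef
  obtain ⟨P, hP⟩ := exists_conj_eq φ hcompl b₁ b₂' e h₁ h₂
  rw [hAφ] at hP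
  have haA₁ : aeval A₁ g = 0 := aeval_toMatrix_eq_zero b₁ φ₁ haφ₁
  have hchA₁ : A₁.charpoly = (X - C α) ^ m := by
    rw [hA₁def, LinearMap.charpoly_toMatrix, ← LinearMap.charpoly_toMatrix φ₁ b₁', ← hM₁def,
      hchM₁, hd₁m]
  have hnilA₁ : IsNilpotent (A₁ - α • (1 : Matrix (Fin m) (Fin m) F)) := by
    refine ⟨m, ?_⟩
    have hh : (A₁ - α • (1 : Matrix (Fin m) (Fin m) F)) ^ m = aeval A₁ g := by
      rw [hgdef, map_pow, map_sub, aeval_X, aeval_C, Algebra.algebraMap_eq_smul_one]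
    rw [hh, haA₁]
  -- the two vanishing conditions
  have h12 : ∀ Y : Matrix (Fin m) (Fin d₂) F, A₁ * Y = lam • (Y * M₂) → Y = 0 := by
    intro Y hY
    have hY' : A₁ * Y = Y * (lam • M₂) := by rw [hY, Matrix.mul_smul]
    have hint := aeval_intertwine hY' g
    rw [haA₁, Matrix.zero_mul] at hint
    have hu : IsUnit (aeval (lam • M₂) g) := by
      rw [hgdef, map_pow]
      apply IsUnit.pow
      rw [map_sub, aeval_X, aeval_C, Algebra.algebraMap_eq_smul_one]
      rw [Matrix.isUnit_iff_isUnit_det]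
      have hrw : lam • M₂ - α • (1 : Matrix (Fin d₂) (Fin d₂) F) =
          lam • (M₂ - (lam⁻¹ * α) • 1) := by
        rw [smul_sub, smul_smul]
        congr 2
        field_simp
      rw [hrw, Matrix.det_smul, isUnit_iff_ne_zero]
      apply mul_ne_zero (pow_ne_zero _ hlam)
      have hne : M₂ - (lam⁻¹ * α) • (1 : Matrix (Fin d₂) (Fin d₂) F) =
          -((lam⁻¹ * α) • 1 - M₂) := (neg_sub _ _).symm
      rw [hne, Matrix.det_neg, ← eval_charpoly_eq_det, hchM₂]
      exact mul_ne_zero (pow_ne_zero _ (neg_ne_zero.mpr one_ne_zero)) hfli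
    obtain ⟨u, hu'⟩ := hu
    rw [← hu'] at hint
    calc Y = Y * ((↑u : Matrix (Fin d₂) (Fin d₂) F) * (↑u⁻¹ : Matrix (Fin d₂) (Fin d₂) F)) := by
          rw [Units.mul_inv, Matrix.mul_one]
      _ = (Y * (↑u : Matrix (Fin d₂) (Fin d₂) F)) * (↑u⁻¹ : Matrix (Fin d₂) (Fin d₂) F) := by
          rw [Matrix.mul_assoc]
      _ = (0 : Matrix (Fin m) (Fin d₂) F) * (↑u⁻¹ : Matrix (Fin d₂) (Fin d₂) F) := by
          rw [← hint]
      _ = 0 := Matrix.zero_mul _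
  have h21 : ∀ Y : Matrix (Fin d₂) (Fin m) F, M₂ * Y = lam • (Y * A₁) → Y = 0 := by
    intro Y hY
    have hY' : M₂ * Y = Y * (lam • A₁) := by rw [hY, Matrix.mul_smul]
    have hint := aeval_intertwine hY' f
    rw [haM₂, Matrix.zero_mul] at hint
    have hu : IsUnit (aeval (lam • A₁) f) := by
      apply isUnit_aeval_of_nilpotent_shift (lam • A₁) (lam * α) ?_ hfl
      have hrw : lam • A₁ - (lam * α) • (1 : Matrix (Fin m) (Fin m) F) =
          lam • (A₁ - α • 1) := by
        rw [smul_sub, smul_smul]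
      rw [hrw]
      exact hnilA₁.smul lam
    obtain ⟨u, hu'⟩ := hu
    rw [← hu'] at hint
    calc Y = Y * ((↑u : Matrix (Fin m) (Fin m) F) * (↑u⁻¹ : Matrix (Fin m) (Fin m) F)) := by
          rw [Units.mul_inv, Matrix.mul_one]
      _ = (Y * (↑u : Matrix (Fin m) (Fin m) F)) * (↑u⁻¹ : Matrix (Fin m) (Fin m) F) := by
          rw [Matrix.mul_assoc]
      _ = (0 : Matrix (Fin d₂) (Fin m) F) * (↑u⁻¹ : Matrix (Fin m) (Fin m) F) := by
          rw [← hint]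
      _ = 0 := Matrix.zero_mul _
  refine ⟨d₂, A₁, M₂, e, P, hP, hchA₁, hchM₂, ?_⟩
  have E1 := twistedConjEquiv (unitConjLinEquiv P) (unitConjLinEquiv_mul P) A lam
  have hσ : unitConjLinEquiv P A =
      Matrix.reindex e e (Matrix.fromBlocks A₁ 0 0 M₂) := hP
  rw [hσ] at E1
  have E2 := twistedConjEquiv (Matrix.reindexLinearEquiv F F e e) (reindexLinearEquiv_mul' e)
    (Matrix.fromBlocks A₁ 0 0 M₂) lam
  rw [Matrix.reindexLinearEquiv_apply] at E2
  exact ⟨(E1.trans E2.symm).trans (twistedBlockEquiv A₁ M₂ lam h12 h21)⟩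
end

section
/- Let F be a field, λ ∈ F with λ ≠ 0, and let A ∈ F^{n×n} be the block diagonal matrix ⊕_{i=1}^{k} J_{μ_i} of nilpotent Jordan blocks, where μ = (μ₁, …, μ_k) is a partition of n with μ₁ ≥ μ₂ ≥ ⋯ ≥ μ_k ≥ 1. Then dim C_F(A,λ) = Σ_{i=1}^{μ₁} (μ'_i)², where μ' is the conjugate partition of μ; in particular dim C_F(A,λ) ≥ k², where k = μ'₁ is the nullity of A. -/
open Matrix Module

/-- The `μ × μ` nilpotent Jordan block, with `1` in positions `(i, i+1)`. -/
def jordanBlock (F : Type*) [Field F] (μ : ℕ) : Matrix (Fin μ) (Fin μ) F :=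
  Matrix.of fun i j => if (i : ℕ) + 1 = (j : ℕ) then 1 else 0

section Single

variable {F : Type*} [Field F]

/-- The shift operator whose kernel is the single-block-pair twisted intertwiner space. -/
def shiftMap (F : Type*) [Field F] (lam : F) (m n : ℕ) :
    Matrix (Fin m) (Fin n) F →ₗ[F] Matrix (Fin m) (Fin n) F where
  toFun B := Matrix.of fun i j =>
    (if h : (i : ℕ) + 1 < m then B ⟨(i : ℕ) + 1, h⟩ j else 0) -
      lam * (if 0 < (j : ℕ) then B i ⟨(j : ℕ) - 1, Nat.lt_of_le_of_lt (Nat.sub_le _ _) j.isLt⟩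
        else 0)
  map_add' B C := by
    ext i j
    simp only [Matrix.of_apply, Matrix.add_apply]
    split_ifs <;> ring
  map_smul' c B := by
    ext i j
    simp only [Matrix.of_apply, Matrix.smul_apply, RingHom.id_apply, smul_eq_mul]
    split_ifs <;> ring

lemma mem_ker_shiftMap {lam : F} {m n : ℕ} (B : Matrix (Fin m) (Fin n) F) :
    B ∈ LinearMap.ker (shiftMap F lam m n) ↔
      ∀ (i : Fin m) (j : Fin n),
        (if h : (i : ℕ) + 1 < m then B ⟨(i : ℕ) + 1, h⟩ j else 0) =
          lam * (if 0 < (j : ℕ) then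
            B i ⟨(j : ℕ) - 1, Nat.lt_of_le_of_lt (Nat.sub_le _ _) j.isLt⟩ else 0) := by
  rw [LinearMap.mem_ker]
  constructor
  · intro h i j
    have := congrFun (congrFun h i) j
    simpa [shiftMap, sub_eq_zero] using this
  · intro h
    ext i j
    simp only [shiftMap, LinearMap.coe_mk, AddHom.coe_mk, Matrix.of_apply, Matrix.zero_apply]
    rw [sub_eq_zero]
    exact h i j

def phiFun (lam : F) (m n : ℕ) (c : Fin (min m n) → F) : Matrix (Fin m) (Fin n) F :=
  Matrix.of fun i j =>
    if h : (n - m) + (i : ℕ) ≤ (j : ℕ) then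
      lam ^ (i : ℕ) * c ⟨(j : ℕ) - (i : ℕ) - (n - m), by
        have hi := i.isLt; have hj := j.isLt; omega⟩
    else 0

lemma phiFun_apply_zero (lam : F) (m n : ℕ) (hm : 0 < m) (c : Fin (min m n) → F)
    (t : Fin (min m n)) :
    phiFun lam m n c ⟨0, hm⟩ ⟨(n - m) + (t : ℕ), by have := t.isLt; omega⟩ = c t := by
  have ht := t.isLt
  simp only [phiFun, Matrix.of_apply]
  rw [dif_pos (by simp)]
  simp only [pow_zero, one_mul]
  congr 1
  exact Fin.ext (by simp)

lemma phiFun_mem_ker (lam : F) (m n : ℕ) (c : Fin (min m n) → F) :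
    phiFun lam m n c ∈ LinearMap.ker (shiftMap F lam m n) := by
  rw [mem_ker_shiftMap]
  intro i j
  have hi := i.isLt; have hj := j.isLt
  simp only [phiFun, Matrix.of_apply]
  by_cases h1 : (i : ℕ) + 1 < m
  · rw [dif_pos h1]
    by_cases h2 : 0 < (j : ℕ)
    · rw [if_pos h2]
      by_cases h3 : (n - m) + ((i : ℕ) + 1) ≤ (j : ℕ)
      · rw [dif_pos h3, dif_pos (show (n - m) + (i : ℕ) ≤ ((j:ℕ) - 1 : ℕ) by omega)]
        have e : c ⟨(j:ℕ) - ((i:ℕ)+1) - (n-m), by omega⟩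
            = c ⟨(j:ℕ) - 1 - (i:ℕ) - (n-m), by omega⟩ := congrArg c (Fin.mk_eq_mk.mpr (by omega))
        rw [e]
        ring
      · rw [dif_neg h3, dif_neg (show ¬ ((n - m) + (i : ℕ) ≤ ((j:ℕ) - 1 : ℕ)) by omega)]
        ring
    · rw [if_neg h2, dif_neg (show ¬ ((n - m) + ((i : ℕ) + 1) ≤ (j : ℕ)) by omega)]
      ring
  · rw [dif_neg h1]
    by_cases h2 : 0 < (j : ℕ)
    · rw [if_pos h2, dif_neg (show ¬ ((n - m) + (i : ℕ) ≤ ((j:ℕ) - 1 : ℕ)) by omega)]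
      ring
    · rw [if_neg h2]; ring

lemma ker_structure {lam : F} (hlam : lam ≠ 0) {m n : ℕ} (hm : 0 < m)
    {B : Matrix (Fin m) (Fin n) F} (hB : B ∈ LinearMap.ker (shiftMap F lam m n)) :
    ∀ (i : Fin m) (j : Fin n), B i j =
      if h : (n - m) + (i : ℕ) ≤ (j : ℕ) then
        lam ^ (i : ℕ) * B ⟨0, hm⟩ ⟨(j : ℕ) - (i : ℕ), by have := j.isLt; omega⟩
      else 0 := by
  have hrel := (mem_ker_shiftMap B).mp hB
  have hrel' : ∀ (i : ℕ) (hi : i + 1 < m) (j : ℕ) (hj : j < n),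
      B ⟨i + 1, hi⟩ ⟨j, hj⟩ =
        lam * (if 0 < j then B ⟨i, by omega⟩ ⟨j - 1, by omega⟩ else 0) := by
    intro i hi j hj
    have h := hrel ⟨i, by omega⟩ ⟨j, hj⟩
    rw [dif_pos (show i + 1 < m from hi)] at h
    exact h
  have hlast : ∀ (j : ℕ) (hj : j < n - 1), B ⟨m - 1, by omega⟩ ⟨j, by omega⟩ = 0 := by
    intro j hj
    have h := hrel ⟨m - 1, by omega⟩ ⟨j + 1, by omega⟩
    rw [dif_neg (show ¬ (m - 1 + 1 < m) by omega), if_pos (show 0 < j + 1 by omega)] at h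
    exact (mul_eq_zero.mp h.symm).resolve_left hlam
  have hdiag : ∀ (s : ℕ) (hs : s < m) (j : ℕ) (hj : j + s < n),
      B ⟨s, hs⟩ ⟨j + s, hj⟩ = lam ^ s * B ⟨0, hm⟩ ⟨j, by omega⟩ := by
    intro s
    induction s with
    | zero => intro hs j hj; simp
    | succ s IH =>
      intro hs j hj
      have h := hrel' s hs (j + s + 1) (by omega)
      rw [if_pos (show 0 < j + s + 1 by omega)] at h
      calc B ⟨s + 1, hs⟩ ⟨j + (s + 1), hj⟩
          = lam * B ⟨s, by omega⟩ ⟨j + s + 1 - 1, by omega⟩ := h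
        _ = lam * B ⟨s, by omega⟩ ⟨j + s, by omega⟩ := by
            rw [congrArg (B ⟨s, by omega⟩)
              (Fin.mk_eq_mk.mpr (show j + s + 1 - 1 = j + s by omega))]
        _ = lam * (lam ^ s * B ⟨0, hm⟩ ⟨j, by omega⟩) := by
            rw [IH (by omega) j (by omega)]
        _ = lam ^ (s + 1) * B ⟨0, hm⟩ ⟨j, by omega⟩ := by ring
  have hZ : ∀ (j : ℕ) (hj : j < n - m), B ⟨0, hm⟩ ⟨j, by omega⟩ = 0 := by
    intro j hj
    have h1 := hdiag (m - 1) (by omega) j (by omega)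
    have h2 : B ⟨m - 1, by omega⟩ ⟨j + (m - 1), by omega⟩ = 0 := hlast (j + (m - 1)) (by omega)
    have h3 := h2.symm.trans h1
    exact ((mul_eq_zero.mp h3.symm).resolve_left (pow_ne_zero _ hlam))
  have H : ∀ (i : ℕ) (hi : i < m) (jv : ℕ) (hjv : jv < n),
      B ⟨i, hi⟩ ⟨jv, hjv⟩ =
        if h : (n - m) + i ≤ jv then
          lam ^ i * B ⟨0, hm⟩ ⟨jv - i, by omega⟩
        else 0 := by
    intro i
    induction i with
    | zero =>
      intro hi jv hjv
      by_cases h : (n - m) + 0 ≤ jv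
      · rw [dif_pos h]
        simp only [pow_zero, one_mul]
        exact congrArg _ (Fin.mk_eq_mk.mpr (by omega))
      · rw [dif_neg h]
        exact hZ jv (by omega)
    | succ i IH =>
      intro hi jv hjv
      have h := hrel' i hi jv hjv
      refine h.trans ?_
      by_cases hj0 : 0 < jv
      · rw [if_pos hj0, IH (by omega) (jv - 1) (by omega)]
        by_cases hc : (n - m) + (i + 1) ≤ jv
        · rw [dif_pos (show (n - m) + i ≤ jv - 1 by omega), dif_pos hc]
          rw [congrArg (B ⟨0, hm⟩)
            (Fin.mk_eq_mk.mpr (show jv - 1 - i = jv - (i + 1) by omega))]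
          ring
          omega
        · rw [dif_neg (show ¬ ((n - m) + i ≤ jv - 1) by omega), dif_neg hc]; ring
      · rw [if_neg hj0, dif_neg (show ¬ ((n - m) + (i + 1) ≤ jv) by omega)]; ring
  intro i j
  obtain ⟨iv, hiv⟩ := i
  obtain ⟨jv, hjv⟩ := j
  exact H iv hiv jv hjv

def phiMap (lam : F) (m n : ℕ) : (Fin (min m n) → F) →ₗ[F] Matrix (Fin m) (Fin n) F where
  toFun := phiFun lam m n
  map_add' c d := by
    ext i j
    simp only [phiFun, Matrix.of_apply, Matrix.add_apply, Pi.add_apply]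
    split_ifs <;> ring
  map_smul' a c := by
    ext i j
    simp only [phiFun, Matrix.of_apply, Matrix.smul_apply, Pi.smul_apply, RingHom.id_apply,
      smul_eq_mul]
    split_ifs <;> ring

lemma finrank_ker_shiftMap (lam : F) (hlam : lam ≠ 0) (m n : ℕ) (hm : 0 < m) (hn : 0 < n) :
    finrank F ↥(LinearMap.ker (shiftMap F lam m n)) = min m n := by
  apply le_antisymm
  · let ψ : ↥(LinearMap.ker (shiftMap F lam m n)) →ₗ[F] (Fin (min m n) → F) :=
      { toFun := fun B t => (B : Matrix (Fin m) (Fin n) F) ⟨0, hm⟩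
          ⟨(n - m) + (t : ℕ), by have := t.isLt; omega⟩
        map_add' := fun B C => rfl
        map_smul' := fun a B => rfl }
    have hinj : Function.Injective ψ := by
      rw [← LinearMap.ker_eq_bot, LinearMap.ker_eq_bot']
      intro B hB0
      have hs := ker_structure hlam hm B.2
      apply Subtype.ext
      ext i j
      rw [hs i j]
      show _ = (0 : F)
      by_cases h : (n - m) + (i : ℕ) ≤ (j : ℕ)
      · rw [dif_pos h]
        have hj := j.isLt
        have ht : (j : ℕ) - (i : ℕ) - (n - m) < min m n := by have := i.isLt; omega
        have h0 := congrFun hB0 ⟨(j : ℕ) - (i : ℕ) - (n - m), ht⟩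
        have h0' : (B : Matrix (Fin m) (Fin n) F) ⟨0, hm⟩
            ⟨(n - m) + ((j : ℕ) - (i : ℕ) - (n - m)), by omega⟩ = 0 := h0
        rw [congrArg ((B : Matrix (Fin m) (Fin n) F) ⟨0, hm⟩)
          (Fin.mk_eq_mk.mpr (show (j : ℕ) - (i : ℕ) = (n - m) + ((j : ℕ) - (i : ℕ) - (n - m))
            by omega)), h0', mul_zero]
        omega
      · rw [dif_neg h]
    calc finrank F ↥(LinearMap.ker (shiftMap F lam m n))
        ≤ finrank F (Fin (min m n) → F) := LinearMap.finrank_le_finrank_of_injective hinj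
      _ = min m n := Module.finrank_fin_fun F
  · let φ : (Fin (min m n) → F) →ₗ[F] ↥(LinearMap.ker (shiftMap F lam m n)) :=
      LinearMap.codRestrict _ (phiMap lam m n) (phiFun_mem_ker lam m n)
    have hinj : Function.Injective φ := by
      rw [← LinearMap.ker_eq_bot, LinearMap.ker_eq_bot']
      intro c hc
      have hc' : phiFun lam m n c = 0 := congrArg Subtype.val hc
      funext t
      have := phiFun_apply_zero lam m n hm c t
      rw [hc'] at this
      exact this.symm
    calc min m n = finrank F (Fin (min m n) → F) := (Module.finrank_fin_fun F).symm
      _ ≤ finrank F ↥(LinearMap.ker (shiftMap F lam m n)) :=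
        LinearMap.finrank_le_finrank_of_injective hinj

end Single

section Blocks

variable {F : Type*} [Field F]

lemma sum_jordan_left (m : ℕ) (i : Fin m) (x : Fin m → F) :
    ∑ l, jordanBlock F m i l * x l = if h : (i : ℕ) + 1 < m then x ⟨(i : ℕ) + 1, h⟩ else 0 := by
  by_cases h : (i : ℕ) + 1 < m
  · rw [dif_pos h, Finset.sum_eq_single (⟨(i : ℕ) + 1, h⟩ : Fin m)]
    · simp [jordanBlock]
    · intro l _ hl
      rw [jordanBlock, Matrix.of_apply, if_neg (fun hv => hl (Fin.ext hv.symm)), zero_mul]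
    · simp
  · rw [dif_neg h]
    apply Finset.sum_eq_zero
    intro l _
    rw [jordanBlock, Matrix.of_apply, if_neg (fun hv => h (by rw [hv]; exact l.isLt)), zero_mul]

lemma sum_jordan_right (n : ℕ) (j : Fin n) (x : Fin n → F) :
    ∑ l, x l * jordanBlock F n l j =
      if 0 < (j : ℕ) then x ⟨(j : ℕ) - 1, Nat.lt_of_le_of_lt (Nat.sub_le _ _) j.isLt⟩
      else 0 := by
  by_cases h : 0 < (j : ℕ)
  · rw [if_pos h, Finset.sum_eq_single
      (⟨(j : ℕ) - 1, Nat.lt_of_le_of_lt (Nat.sub_le _ _) j.isLt⟩ : Fin n)]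
    · rw [jordanBlock, Matrix.of_apply, if_pos (show (j : ℕ) - 1 + 1 = (j : ℕ) by omega), mul_one]
    · intro l _ hl
      rw [jordanBlock, Matrix.of_apply, if_neg (fun hv => hl (Fin.ext (show (l : ℕ) = (j : ℕ) - 1 by omega))), mul_zero]
    · simp
  · rw [if_neg h]
    apply Finset.sum_eq_zero
    intro l _
    rw [jordanBlock, Matrix.of_apply, if_neg (by omega), mul_zero]

variable {k : ℕ} (μ : Fin k → ℕ)

lemma bdJ_mul_apply (B : Matrix ((i : Fin k) × Fin (μ i)) ((i : Fin k) × Fin (μ i)) F)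
    (p q : Fin k) (i : Fin (μ p)) (j : Fin (μ q)) :
    (blockDiagonal' (fun r => jordanBlock F (μ r)) * B) ⟨p, i⟩ ⟨q, j⟩ =
      if h : (i : ℕ) + 1 < μ p then B ⟨p, ⟨(i : ℕ) + 1, h⟩⟩ ⟨q, j⟩ else 0 := by
  rw [Matrix.mul_apply, ← Finset.univ_sigma_univ, Finset.sum_sigma, Finset.sum_eq_single p]
  · rw [← sum_jordan_left (μ p) i fun l => B ⟨p, l⟩ ⟨q, j⟩]
    exact Finset.sum_congr rfl fun l _ => by rw [blockDiagonal'_apply_eq]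
  · intro r _ hr
    apply Finset.sum_eq_zero
    intro l _
    rw [blockDiagonal'_apply_ne _ _ _ (Ne.symm hr), zero_mul]
  · simp

lemma mul_bdJ_apply (B : Matrix ((i : Fin k) × Fin (μ i)) ((i : Fin k) × Fin (μ i)) F)
    (p q : Fin k) (i : Fin (μ p)) (j : Fin (μ q)) :
    (B * blockDiagonal' (fun r => jordanBlock F (μ r))) ⟨p, i⟩ ⟨q, j⟩ =
      if 0 < (j : ℕ) then
        B ⟨p, i⟩ ⟨q, ⟨(j : ℕ) - 1, Nat.lt_of_le_of_lt (Nat.sub_le _ _) j.isLt⟩⟩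
      else 0 := by
  rw [Matrix.mul_apply, ← Finset.univ_sigma_univ, Finset.sum_sigma, Finset.sum_eq_single q]
  · rw [← sum_jordan_right (μ q) j fun l => B ⟨p, i⟩ ⟨q, l⟩]
    exact Finset.sum_congr rfl fun l _ => by rw [blockDiagonal'_apply_eq]
  · intro r _ hr
    apply Finset.sum_eq_zero
    intro l _
    rw [blockDiagonal'_apply_ne _ _ _ hr, mul_zero]
  · simp

lemma mem_tc_iff (lam : F) (B : Matrix ((i : Fin k) × Fin (μ i)) ((i : Fin k) × Fin (μ i)) F) :
    B ∈ twistedCentralizer (blockDiagonal' fun r : Fin k => jordanBlock F (μ r)) lam ↔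
      ∀ p q : Fin k,
        Matrix.of (fun (i : Fin (μ p)) (j : Fin (μ q)) => B ⟨p, i⟩ ⟨q, j⟩) ∈
          LinearMap.ker (shiftMap F lam (μ p) (μ q)) := by
  unfold twistedCentralizer
  rw [LinearMap.mem_ker]
  constructor
  · intro h p q
    rw [mem_ker_shiftMap]
    intro i j
    have h2 := congrFun (congrFun h ⟨p, i⟩) ⟨q, j⟩
    simp only [LinearMap.sub_apply, LinearMap.smul_apply, LinearMap.mulLeft_apply,
      LinearMap.mulRight_apply, Matrix.sub_apply, Matrix.smul_apply, smul_eq_mul,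
      Matrix.zero_apply] at h2
    rw [bdJ_mul_apply, mul_bdJ_apply, sub_eq_zero] at h2
    simpa using h2
  · intro h
    ext ⟨p, i⟩ ⟨q, j⟩
    simp only [LinearMap.sub_apply, LinearMap.smul_apply, LinearMap.mulLeft_apply,
      LinearMap.mulRight_apply, Matrix.sub_apply, Matrix.smul_apply, smul_eq_mul,
      Matrix.zero_apply]
    rw [bdJ_mul_apply, mul_bdJ_apply, sub_eq_zero]
    have h3 := (mem_ker_shiftMap _).mp (h p q) i j
    simpa using h3

end Blocks

section Equiv

variable {F : Type*} [Field F] {k : ℕ} (μ : Fin k → ℕ)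

noncomputable def tcEquiv (lam : F) :
    ↥(twistedCentralizer (blockDiagonal' fun r : Fin k => jordanBlock F (μ r)) lam) ≃ₗ[F]
      ((p : Fin k) → (q : Fin k) → ↥(LinearMap.ker (shiftMap F lam (μ p) (μ q)))) where
  toFun B p q := ⟨Matrix.of fun i j =>
      (B : Matrix ((i : Fin k) × Fin (μ i)) ((i : Fin k) × Fin (μ i)) F) ⟨p, i⟩ ⟨q, j⟩,
    ((mem_tc_iff μ lam _).mp B.2) p q⟩
  map_add' B C := rfl
  map_smul' a B := rfl
  invFun C := ⟨Matrix.of fun x y =>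
      (C x.1 y.1 : Matrix (Fin (μ x.1)) (Fin (μ y.1)) F) x.2 y.2, by
    rw [mem_tc_iff]
    intro p q
    exact (C p q).2⟩
  left_inv B := by
    apply Subtype.ext
    ext ⟨p, i⟩ ⟨q, j⟩
    rfl
  right_inv C := by
    funext p q
    apply Subtype.ext
    ext i j
    rfl

lemma finrank_tc (lam : F) (hlam : lam ≠ 0) (hpos : ∀ r, 0 < μ r) :
    finrank F
        ↥(twistedCentralizer (blockDiagonal' fun r : Fin k => jordanBlock F (μ r)) lam) =
      ∑ p : Fin k, ∑ q : Fin k, min (μ p) (μ q) := by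
  rw [LinearEquiv.finrank_eq (tcEquiv μ lam)]
  rw [Module.finrank_pi_fintype]
  refine Finset.sum_congr rfl fun p _ => ?_
  rw [Module.finrank_pi_fintype]
  exact Finset.sum_congr rfl fun q _ =>
    finrank_ker_shiftMap lam hlam (μ p) (μ q) (hpos p) (hpos q)

end Equiv

lemma comb_sum_min {k : ℕ} (hk : 0 < k) (μ : Fin k → ℕ) (hanti : Antitone μ) :
    ∑ p : Fin k, ∑ q : Fin k, min (μ p) (μ q) =
      ∑ i ∈ Finset.Icc 1 (μ ⟨0, hk⟩),
        ((Finset.univ.filter fun j : Fin k => i ≤ μ j).card) ^ 2 := by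
  set M := μ ⟨0, hk⟩ with hMdef
  have hM : ∀ p, μ p ≤ M := fun p => hanti (by simp [Fin.le_def])
  have key : ∀ a b : ℕ, a ≤ M → b ≤ M →
      min a b = ∑ i ∈ Finset.Icc 1 M,
        (if i ≤ a then 1 else 0) * (if i ≤ b then 1 else 0) := by
    intro a b ha hb
    have h1 : ∀ i, (if i ≤ a then (1 : ℕ) else 0) * (if i ≤ b then 1 else 0) =
        if i ≤ a ∧ i ≤ b then 1 else 0 := by
      intro i
      by_cases h1 : i ≤ a <;> by_cases h2 : i ≤ b <;> simp [h1, h2]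
    rw [Finset.sum_congr rfl fun i _ => h1 i, ← Finset.card_filter]
    have h2 : (Finset.Icc 1 M).filter (fun i => i ≤ a ∧ i ≤ b) = Finset.Icc 1 (min a b) := by
      ext i
      simp only [Finset.mem_filter, Finset.mem_Icc]
      omega
    rw [h2, Nat.card_Icc]
    omega
  have step : ∀ i, ((Finset.univ.filter fun j : Fin k => i ≤ μ j).card) ^ 2
      = ∑ p : Fin k, ∑ q : Fin k,
          (if i ≤ μ p then 1 else 0) * (if i ≤ μ q then 1 else 0) := by
    intro i
    rw [sq, Finset.card_filter, Finset.sum_mul_sum]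
  symm
  calc ∑ i ∈ Finset.Icc 1 M, ((Finset.univ.filter fun j : Fin k => i ≤ μ j).card) ^ 2
      = ∑ i ∈ Finset.Icc 1 M, ∑ p : Fin k, ∑ q : Fin k,
          (if i ≤ μ p then 1 else 0) * (if i ≤ μ q then 1 else 0) :=
        Finset.sum_congr rfl fun i _ => step i
    _ = ∑ p : Fin k, ∑ i ∈ Finset.Icc 1 M, ∑ q : Fin k,
          (if i ≤ μ p then 1 else 0) * (if i ≤ μ q then 1 else 0) := Finset.sum_comm
    _ = ∑ p : Fin k, ∑ q : Fin k, ∑ i ∈ Finset.Icc 1 M,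
          (if i ≤ μ p then 1 else 0) * (if i ≤ μ q then 1 else 0) :=
        Finset.sum_congr rfl fun p _ => Finset.sum_comm
    _ = ∑ p : Fin k, ∑ q : Fin k, min (μ p) (μ q) :=
        Finset.sum_congr rfl fun p _ => Finset.sum_congr rfl fun q _ =>
          (key _ _ (hM p) (hM q)).symm

theorem dim_twistedCentralizer_jordan {F : Type*} [Field F] {n k : ℕ} (hk : 0 < k)
    (lam : F) (hlam : lam ≠ 0) (μ : Fin k → ℕ) (hanti : Antitone μ)
    (hpos : ∀ i, 1 ≤ μ i) (hsum : ∑ i, μ i = n) :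
    finrank F (twistedCentralizer
        (Matrix.blockDiagonal' (fun i : Fin k => jordanBlock F (μ i))) lam) =
      ∑ i ∈ Finset.Icc 1 (μ ⟨0, hk⟩),
        ((Finset.univ.filter fun j : Fin k => i ≤ μ j).card) ^ 2 ∧
    k ^ 2 ≤ finrank F (twistedCentralizer
        (Matrix.blockDiagonal' (fun i : Fin k => jordanBlock F (μ i))) lam) := by
  have h1 := finrank_tc μ lam hlam fun r => hpos r
  have h2 := comb_sum_min hk μ hanti
  constructor
  · rw [h1]; exact h2
  · rw [h1, h2]
    have hmem : 1 ∈ Finset.Icc 1 (μ ⟨0, hk⟩) := by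
      simp only [Finset.mem_Icc]
      exact ⟨le_refl 1, hpos _⟩
    have h3 : (Finset.univ.filter fun j : Fin k => 1 ≤ μ j) = Finset.univ :=
      Finset.filter_true_of_mem fun j _ => hpos j
    calc k ^ 2 = ((Finset.univ.filter fun j : Fin k => 1 ≤ μ j).card) ^ 2 := by
          rw [h3, Finset.card_univ, Fintype.card_fin]
      _ ≤ ∑ i ∈ Finset.Icc 1 (μ ⟨0, hk⟩),
            ((Finset.univ.filter fun j : Fin k => i ≤ μ j).card) ^ 2 :=
          Finset.single_le_sum
            (f := fun i => ((Finset.univ.filter fun j : Fin k => i ≤ μ j).card) ^ 2)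
            (fun i _ => Nat.zero_le _) hmem
end

section
/- Let F be a field, λ ∈ F, and let A ∈ F^{n×n} be a singular matrix (det A = 0). Then the twisted centralizer code C_F(A,λ) contains a nonzero matrix. -/
open Matrix Module

theorem twistedCentralizer_ne_bot_of_singular {F : Type*} [Field F] {n : ℕ}
    (lam : F) (A : Matrix (Fin n) (Fin n) F) (h : A.det = 0) :
    ∃ B ∈ twistedCentralizer A lam, B ≠ 0 := by
  obtain ⟨v, hv, hAv⟩ := (Matrix.exists_mulVec_eq_zero_iff).2 h
  obtain ⟨w, hw, hwA⟩ := (Matrix.exists_vecMul_eq_zero_iff).2 h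
  refine ⟨vecMulVec v w, ?_, ?_⟩
  · have h1 : A * vecMulVec v w = 0 := by
      ext i j
      have h0 := congrFun hAv i
      simp [Matrix.mulVec, dotProduct] at h0
      simp [Matrix.mul_apply, vecMulVec_apply, ← mul_assoc, ← Finset.sum_mul, h0]
    have h2 : vecMulVec v w * A = 0 := by
      ext i j
      have h0 := congrFun hwA j
      simp [Matrix.vecMul, dotProduct] at h0
      simp [Matrix.mul_apply, vecMulVec_apply, mul_assoc, ← Finset.mul_sum, h0]
    simp [twistedCentralizer, LinearMap.mem_ker, LinearMap.mulLeft_apply,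
      LinearMap.mulRight_apply, h1, h2]
  · obtain ⟨i, hi⟩ := Function.ne_iff.1 hv
    obtain ⟨j, hj⟩ := Function.ne_iff.1 hw
    intro hB
    have := congrFun (congrFun hB i) j
    simp [vecMulVec_apply] at this
    tauto
end

section
/- Let F be a field, λ ∈ F, and A ∈ F^{n×n} whose characteristic polynomial splits over F as c_A(t) = ∏_{j=1}^{n} (t − α_j). Then the matrix H = Aᵀ ⊗ I_n − λ I_n ⊗ A ∈ F^{n²×n²} has characteristic polynomial c_H(t) = ∏_{i=1}^{n} ∏_{j=1}^{n} (t − (α_i − λα_j)). -/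
open Matrix Module Kronecker Polynomial

section AuxLemmas
variable {F : Type*} [Field F]

private lemma myCharpolyConj {ι : Type*} [DecidableEq ι] [Fintype ι]
    (P M : Matrix ι ι F) (hP : IsUnit P.det) :
    (P * M * P⁻¹).charpoly = M.charpoly := by
  have h1 : P * P⁻¹ = 1 := mul_nonsing_inv P hP
  have hmap : (C : F →+* F[X]).mapMatrix P * (C : F →+* F[X]).mapMatrix P⁻¹ = 1 := by
    rw [← _root_.map_mul ((C : F →+* F[X]).mapMatrix) P P⁻¹, h1, _root_.map_one]
  have key : charmatrix (P * M * P⁻¹)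
      = (C : F →+* F[X]).mapMatrix P * charmatrix M * (C : F →+* F[X]).mapMatrix P⁻¹ := by
    unfold charmatrix
    rw [Matrix.mul_sub, Matrix.sub_mul]
    congr 1
    · rw [Matrix.mul_assoc, scalar_commute (X : F[X]) (fun r => Commute.all _ _) _,
        ← Matrix.mul_assoc, hmap, Matrix.one_mul]
    · rw [← _root_.map_mul ((C : F →+* F[X]).mapMatrix),
        ← _root_.map_mul ((C : F →+* F[X]).mapMatrix)]
  unfold Matrix.charpoly
  rw [key, det_mul, det_mul, mul_right_comm, ← det_mul, hmap, det_one, one_mul]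

private lemma myEvalCharpoly {ι : Type*} [DecidableEq ι] [Fintype ι]
    (A : Matrix ι ι F) (μ : F) :
    A.charpoly.eval μ = (μ • (1 : Matrix ι ι F) - A).det := by
  rw [Matrix.charpoly, ← Polynomial.coe_evalRingHom, RingHom.map_det]
  congr 1
  ext i j
  by_cases hij : i = j
  · subst hij
    simp [charmatrix_apply_eq]
  · simp [charmatrix_apply_ne _ _ _ hij, Matrix.one_apply_ne hij]

private lemma myCharpolyUnique {ι : Type*} [DecidableEq ι] [Fintype ι] [Unique ι]
    (M : Matrix ι ι F) : M.charpoly = X - C (M default default) := by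
  rw [Matrix.charpoly, det_unique, charmatrix_apply_eq]


private lemma myCharmatrixSubmatrix {m : ℕ} (M : Matrix (Fin (m+1)) (Fin (m+1)) F) :
    (charmatrix M).submatrix Fin.succ Fin.succ = charmatrix (M.submatrix Fin.succ Fin.succ) := by
  ext i j
  by_cases hij : i = j
  · subst hij
    simp [charmatrix_apply_eq]
  · rw [submatrix_apply, charmatrix_apply_ne _ _ _ (fun h => hij (Fin.succ_injective _ h)),
      charmatrix_apply_ne _ _ _ hij, submatrix_apply]

private lemma myCharpolyPeel {m : ℕ} (μ : F) (M : Matrix (Fin (m+1)) (Fin (m+1)) F)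
    (h : ∀ i, M i 0 = if i = 0 then μ else 0) :
    M.charpoly = (X - C μ) * (M.submatrix Fin.succ Fin.succ).charpoly := by
  have hcm : ∀ i, charmatrix M i 0 = if i = 0 then (X - C μ) else 0 := by
    intro i
    by_cases hi : i = 0
    · subst hi; rw [charmatrix_apply_eq, h, if_pos rfl, if_pos rfl]
    · rw [charmatrix_apply_ne _ _ _ hi, h, if_neg hi, if_neg hi, map_zero, neg_zero]
  unfold Matrix.charpoly
  rw [det_succ_column_zero, Fin.sum_univ_succ]
  have hz : ∀ i : Fin m, ((-1 : F[X]) ^ ((Fin.succ i : Fin (m+1)) : ℕ)) * charmatrix M i.succ 0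
      * ((charmatrix M).submatrix (Fin.succ i).succAbove Fin.succ).det = 0 := by
    intro i
    rw [hcm, if_neg (Fin.succ_ne_zero i), mul_zero, zero_mul]
  rw [Finset.sum_congr rfl (fun i _ => hz i), Finset.sum_const, smul_zero, add_zero,
    hcm, if_pos rfl, Fin.succAbove_zero, myCharmatrixSubmatrix]
  simp

private def emb {m : ℕ} (M : Matrix (Fin m) (Fin m) F) : Matrix (Fin (m+1)) (Fin (m+1)) F :=
  Matrix.of (Fin.cons (Fin.cons 1 0) (fun i => Fin.cons 0 (M i)))

@[simp] private lemma emb_zero_zero {m : ℕ} (M : Matrix (Fin m) (Fin m) F) :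
    emb M 0 0 = 1 := rfl

@[simp] private lemma emb_zero_succ {m : ℕ} (M : Matrix (Fin m) (Fin m) F) (j : Fin m) :
    emb M 0 j.succ = 0 := by simp [emb]

@[simp] private lemma emb_succ_zero {m : ℕ} (M : Matrix (Fin m) (Fin m) F) (i : Fin m) :
    emb M i.succ 0 = 0 := by simp [emb]

@[simp] private lemma emb_succ_succ {m : ℕ} (M : Matrix (Fin m) (Fin m) F) (i j : Fin m) :
    emb M i.succ j.succ = M i j := by simp [emb]

private lemma emb_mul {m : ℕ} (M N : Matrix (Fin m) (Fin m) F) :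
    emb M * emb N = emb (M * N) := by
  ext i j
  induction i using Fin.cases with
  | zero =>
    induction j using Fin.cases with
    | zero => simp [mul_apply, Fin.sum_univ_succ]
    | succ j => simp [mul_apply, Fin.sum_univ_succ]
  | succ i =>
    induction j using Fin.cases with
    | zero => simp [mul_apply, Fin.sum_univ_succ]
    | succ j => simp [mul_apply, Fin.sum_univ_succ]

private lemma emb_one {m : ℕ} : emb (1 : Matrix (Fin m) (Fin m) F) = 1 := by
  ext i j
  induction i using Fin.cases with
  | zero =>
    induction j using Fin.cases with
    | zero => simp [Matrix.one_apply]
    | succ j => simp [Matrix.one_apply, (Fin.succ_ne_zero j).symm]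
  | succ i =>
    induction j using Fin.cases with
    | zero => simp [Matrix.one_apply, Fin.succ_ne_zero i]
    | succ j => simp [Matrix.one_apply, Fin.succ_inj]


private lemma myTriangularize : ∀ (n : ℕ) (A : Matrix (Fin n) (Fin n) F) (α : Fin n → F),
    A.charpoly = ∏ j, (X - C (α j)) →
    ∃ P B : Matrix (Fin n) (Fin n) F, IsUnit P.det ∧
      B.BlockTriangular (id : Fin n → Fin n) ∧ (∀ i, B i i = α i) ∧ A = P * B * P⁻¹ := by
  intro n
  induction n with
  | zero =>
    intro A α _
    exact ⟨1, A, by simp, fun i _ _ => i.elim0, fun i => i.elim0, by simp⟩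
  | succ m ih =>
    intro A α hA
    set μ := α 0 with hμ
    -- find an eigenvector for μ
    have hdet : (μ • (1 : Matrix (Fin (m+1)) (Fin (m+1)) F) - A).det = 0 := by
      rw [← myEvalCharpoly, hA, eval_prod]
      exact Finset.prod_eq_zero (Finset.mem_univ 0) (by simp [hμ])
    obtain ⟨v, hv0, hveq⟩ := (Matrix.exists_mulVec_eq_zero_iff).2 hdet
    have hAv : A *ᵥ v = μ • v := by
      have := sub_mulVec (μ • (1 : Matrix (Fin (m+1)) (Fin (m+1)) F)) A v
      rw [hveq, smul_mulVec, one_mulVec] at this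
      exact (sub_eq_zero.mp this.symm).symm
    obtain ⟨k, hk⟩ := Function.ne_iff.mp hv0
    have hk : v k ≠ 0 := hk
    -- build invertible P with first column v
    set P : Matrix (Fin (m+1)) (Fin (m+1)) F :=
      ((1 : Matrix (Fin (m+1)) (Fin (m+1)) F).updateCol k v).submatrix id ⇑(Equiv.swap 0 k)
      with hPdef
    have hPdet : IsUnit P.det := by
      rw [hPdef, det_permute', ← cramer_apply, cramer_one]
      rcases Int.units_eq_one_or (Equiv.Perm.sign (Equiv.swap (0 : Fin (m+1)) k)) with h | h <;>
        rw [h] <;> simpa [isUnit_iff_ne_zero] using hk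
    have hPcol : ∀ i, P i 0 = v i := by
      intro i
      rw [hPdef, submatrix_apply, id_eq, Equiv.swap_apply_left, updateCol_self]
    -- conjugate
    set Cm : Matrix (Fin (m+1)) (Fin (m+1)) F := P⁻¹ * A * P with hCdef
    have hPe : P *ᵥ (Pi.single 0 1 : Fin (m+1) → F) = v := by
      ext i
      rw [mulVec_single]
      simpa using hPcol i
    have hce : Cm *ᵥ (Pi.single 0 1 : Fin (m+1) → F) = μ • (Pi.single 0 1 : Fin (m+1) → F) := by
      rw [hCdef, ← mulVec_mulVec, ← mulVec_mulVec, hPe, hAv, mulVec_smul, ← hPe,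
        mulVec_mulVec, nonsing_inv_mul P hPdet, one_mulVec]

    have hC0 : ∀ i, Cm i 0 = if i = 0 then μ else 0 := by
      intro i
      have h1 : (Cm *ᵥ (Pi.single 0 1 : Fin (m+1) → F)) i = Cm i 0 := by
        simp [mulVec_single]
      have h2 := congrFun hce i
      rw [h1] at h2
      rw [h2, Pi.smul_apply, Pi.single_apply, smul_eq_mul]
      split <;> simp
    have hAC : A = P * Cm * P⁻¹ := by
      rw [hCdef]
      simp only [← Matrix.mul_assoc]
      rw [mul_nonsing_inv P hPdet, Matrix.one_mul, Matrix.mul_assoc,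
        mul_nonsing_inv P hPdet, Matrix.mul_one]
    have hCchar : Cm.charpoly = ∏ j, (X - C (α j)) := by
      rw [← hA, hAC, myCharpolyConj _ _ hPdet]
    set C₂ : Matrix (Fin m) (Fin m) F := Cm.submatrix Fin.succ Fin.succ with hC₂def
    have hC₂char : C₂.charpoly = ∏ j : Fin m, (X - C (α j.succ)) := by
      have h1 : (X - C μ) * C₂.charpoly = (X - C μ) * ∏ j : Fin m, (X - C (α j.succ)) := by
        rw [← myCharpolyPeel μ Cm hC0, hCchar, Fin.prod_univ_succ, hμ]
      exact mul_left_cancel₀ (Polynomial.monic_X_sub_C μ).ne_zero h1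
    obtain ⟨Q, B₂, hQ, hB₂tri, hB₂diag, hC₂eq⟩ := ih C₂ (fun j => α j.succ) hC₂char
    have hQQ : Q * Q⁻¹ = 1 := mul_nonsing_inv Q hQ
    have hQ'Q : Q⁻¹ * Q = 1 := nonsing_inv_mul Q hQ
    have hembQQ : emb Q * emb Q⁻¹ = 1 := by rw [emb_mul, hQQ, emb_one]
    have hembQ'Q : emb Q⁻¹ * emb Q = 1 := by rw [emb_mul, hQ'Q, emb_one]
    have hembUnit : IsUnit (emb Q).det := isUnit_det_of_right_inverse hembQQ
    set B : Matrix (Fin (m+1)) (Fin (m+1)) F := emb Q⁻¹ * Cm * emb Q with hBdef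
    -- entries of B
    have hBcol : ∀ i, B i 0 = if i = 0 then μ else 0 := by
      intro i
      have h1 : B i 0 = (emb Q⁻¹ * Cm) i 0 := by
        rw [hBdef, mul_apply, Fin.sum_univ_succ]
        simp
      rw [h1, mul_apply, Fin.sum_univ_succ]
      have h3 : ∀ k : Fin m, emb Q⁻¹ i k.succ * Cm k.succ 0 = 0 := fun k => by
        rw [hC0, if_neg (Fin.succ_ne_zero k), mul_zero]
      rw [Finset.sum_congr rfl fun k _ => h3 k, Finset.sum_const, smul_zero, add_zero,
        hC0, if_pos rfl]
      induction i using Fin.cases with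
      | zero => simp
      | succ i => simp [Fin.succ_ne_zero i]
    have hBsucc : ∀ i j, B i.succ j.succ = B₂ i j := by
      intro i j
      have hQC : Q⁻¹ * C₂ * Q = B₂ := by
        rw [hC₂eq]
        simp only [← Matrix.mul_assoc]
        rw [hQ'Q, Matrix.one_mul, Matrix.mul_assoc B₂, hQ'Q, Matrix.mul_one]
      have h1 : B i.succ j.succ = ∑ l, (emb Q⁻¹ * Cm) i.succ l.succ * Q l j := by
        rw [hBdef, mul_apply, Fin.sum_univ_succ]
        simp
      have h5 : ∀ l, (emb Q⁻¹ * Cm) i.succ l.succ = (Q⁻¹ * C₂) i l := by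
        intro l
        rw [mul_apply, mul_apply, Fin.sum_univ_succ]
        simp [hC₂def]
      rw [h1, ← hQC, mul_apply]
      exact Finset.sum_congr rfl fun l _ => by rw [h5 l]
    refine ⟨P * emb Q, B, ?_, ?_, ?_, ?_⟩
    · rw [det_mul]; exact hPdet.mul hembUnit
    · intro i j hij
      induction i using Fin.cases with
      | zero => exact absurd hij (not_lt.2 (Fin.zero_le _))
      | succ i =>
        induction j using Fin.cases with
        | zero => rw [hBcol, if_neg (Fin.succ_ne_zero i)]
        | succ j =>
          rw [hBsucc]
          exact hB₂tri (by simpa [Fin.succ_lt_succ_iff] using hij)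
    · intro i
      induction i using Fin.cases with
      | zero => simpa using hBcol 0
      | succ i => rw [hBsucc]; exact hB₂diag i
    · have hPinv : (P * emb Q)⁻¹ = emb Q⁻¹ * P⁻¹ := by
        apply inv_eq_right_inv
        rw [Matrix.mul_assoc P, ← Matrix.mul_assoc (emb Q), hembQQ, Matrix.one_mul,
          mul_nonsing_inv P hPdet]
      rw [hPinv, hBdef]
      simp only [← Matrix.mul_assoc]
      rw [Matrix.mul_assoc P (emb Q), hembQQ, Matrix.mul_one]
      rw [Matrix.mul_assoc (P * Cm), hembQQ, Matrix.mul_one]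
      exact hAC


private lemma myKronCharpoly {n : ℕ} (lam : F) (B : Matrix (Fin n) (Fin n) F)
    (hB : B.BlockTriangular (id : Fin n → Fin n)) (α : Fin n → F) (hd : ∀ i, B i i = α i) :
    (Bᵀ ⊗ₖ (1 : Matrix (Fin n) (Fin n) F) -
        lam • ((1 : Matrix (Fin n) (Fin n) F) ⊗ₖ B)).charpoly =
      ∏ i, ∏ j, (X - C (α i - lam * α j)) := by
  set T : Matrix (Fin n × Fin n) (Fin n × Fin n) F :=
    Bᵀ ⊗ₖ (1 : Matrix (Fin n) (Fin n) F) - lam • ((1 : Matrix (Fin n) (Fin n) F) ⊗ₖ B)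
    with hTdef
  set b : Fin n × Fin n → ℕ := fun p => (n - (p.1 : ℕ)) * n + (p.2 : ℕ) with hbdef
  have hTapp : ∀ x y, T x y = B y.1 x.1 * (1 : Matrix (Fin n) (Fin n) F) x.2 y.2
      - lam * ((1 : Matrix (Fin n) (Fin n) F) x.1 y.1 * B x.2 y.2) := by
    intro x y
    simp [hTdef, Matrix.kroneckerMap_apply, Matrix.sub_apply, Matrix.smul_apply, smul_eq_mul]
  have hbinj : Function.Injective b := by
    intro p q hpq
    rw [hbdef] at hpq
    simp only at hpq
    have h2 : (p.2 : ℕ) = (q.2 : ℕ) := by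
      have := congrArg (· % n) hpq
      simpa [Nat.mul_comm, Nat.mul_add_mod, Nat.mod_eq_of_lt p.2.isLt,
        Nat.mod_eq_of_lt q.2.isLt] using this
    have hn : 0 < n := p.2.pos
    have h1 : (n - (p.1 : ℕ)) = (n - (q.1 : ℕ)) :=
      Nat.eq_of_mul_eq_mul_right hn (by omega)
    have hp1 := p.1.isLt
    have hq1 := q.1.isLt
    exact Prod.ext (Fin.ext (by omega)) (Fin.ext h2)
  have hT : T.BlockTriangular b := by
    intro x y hlt
    rw [hTapp]
    have e1 : B y.1 x.1 * (1 : Matrix (Fin n) (Fin n) F) x.2 y.2 = 0 := by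
      by_cases h2 : x.2 = y.2
      · have hxy : (x.1 : ℕ) < (y.1 : ℕ) := by
          by_contra hc
          push_neg at hc
          have : b x ≤ b y := by
            rw [hbdef]
            simp only
            have : n - (x.1 : ℕ) ≤ n - (y.1 : ℕ) := Nat.sub_le_sub_left hc n
            have h2' : (x.2 : ℕ) = (y.2 : ℕ) := congrArg Fin.val h2
            calc (n - (x.1:ℕ)) * n + (x.2:ℕ) ≤ (n - (y.1:ℕ)) * n + (x.2:ℕ) :=
                  Nat.add_le_add_right (Nat.mul_le_mul_right n this) _
              _ = (n - (y.1:ℕ)) * n + (y.2:ℕ) := by rw [h2']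
          exact absurd hlt (not_lt.2 this)
        rw [hB (show (id x.1 : Fin n) < id y.1 from hxy), zero_mul]
      · rw [one_apply_ne h2, mul_zero]
    have e2 : (1 : Matrix (Fin n) (Fin n) F) x.1 y.1 * B x.2 y.2 = 0 := by
      by_cases h1 : x.1 = y.1
      · have hv : (n - (y.1:ℕ)) * n + (y.2:ℕ) < (n - (x.1:ℕ)) * n + (x.2:ℕ) := hlt
        rw [h1] at hv
        have hyx : (y.2 : ℕ) < (x.2 : ℕ) := by omega
        rw [hB (show (id y.2 : Fin n) < id x.2 from hyx), mul_zero]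
      · rw [one_apply_ne h1, zero_mul]
    rw [e1, e2, mul_zero, sub_zero]
  rw [hT.charpoly, Finset.prod_image (fun x _ y _ h => hbinj h)]
  rw [← Fintype.prod_prod_type
    (f := fun p : Fin n × Fin n => (X : F[X]) - C (α p.1 - lam * α p.2))]
  refine Finset.prod_congr rfl fun x _ => ?_
  haveI hU : Unique {a // b a = b x} := ⟨⟨⟨x, rfl⟩⟩, fun y => Subtype.ext (hbinj y.2)⟩
  rw [myCharpolyUnique]
  have hdefault : (default : {a // b a = b x}) = ⟨x, rfl⟩ := Subsingleton.elim _ _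
  have hdd : (T.toSquareBlock b (b x)) default default = T x x := by
    rw [toSquareBlock_def, hdefault, of_apply]
  rw [hdd, hTapp, hd, hd, one_apply_eq, one_apply_eq, mul_one, one_mul]

end AuxLemmas

theorem charpoly_parityCheck {F : Type*} [Field F] {n : ℕ}
    (lam : F) (A : Matrix (Fin n) (Fin n) F) (α : Fin n → F)
    (h : A.charpoly = ∏ j, (X - C (α j))) :
    (Aᵀ ⊗ₖ (1 : Matrix (Fin n) (Fin n) F) -
        lam • ((1 : Matrix (Fin n) (Fin n) F) ⊗ₖ A)).charpoly =
      ∏ i, ∏ j, (X - C (α i - lam * α j)) := by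
  obtain ⟨P, B, hP, hBtri, hBdiag, hAeq⟩ := myTriangularize n A α h
  have hPP : P * P⁻¹ = 1 := mul_nonsing_inv P hP
  have hP'P : P⁻¹ * P = 1 := nonsing_inv_mul P hP
  set U : Matrix (Fin n × Fin n) (Fin n × Fin n) F := (P⁻¹)ᵀ ⊗ₖ P with hUdef
  set V : Matrix (Fin n × Fin n) (Fin n × Fin n) F := Pᵀ ⊗ₖ P⁻¹ with hVdef
  have hUV : U * V = 1 := by
    rw [hUdef, hVdef, ← Matrix.mul_kronecker_mul, ← transpose_mul, hPP,
      transpose_one, Matrix.one_kronecker_one]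
  have hU : IsUnit U.det := isUnit_det_of_right_inverse hUV
  have hVinv : U⁻¹ = V := inv_eq_right_inv hUV
  have key : Aᵀ ⊗ₖ (1 : Matrix (Fin n) (Fin n) F) -
      lam • ((1 : Matrix (Fin n) (Fin n) F) ⊗ₖ A)
      = U * (Bᵀ ⊗ₖ (1 : Matrix (Fin n) (Fin n) F) -
        lam • ((1 : Matrix (Fin n) (Fin n) F) ⊗ₖ B)) * V := by
    rw [Matrix.mul_sub, Matrix.sub_mul]
    congr 1
    · have hAT : Aᵀ = P⁻¹ᵀ * Bᵀ * Pᵀ := by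
        rw [hAeq, transpose_mul, transpose_mul, Matrix.mul_assoc]
      rw [hUdef, hVdef, ← Matrix.mul_kronecker_mul, ← Matrix.mul_kronecker_mul,
        Matrix.mul_one, hPP, hAT]
    · rw [mul_smul_comm, smul_mul_assoc]
      congr 1
      rw [hUdef, hVdef, ← Matrix.mul_kronecker_mul, ← Matrix.mul_kronecker_mul,
        Matrix.mul_one, ← transpose_mul, hPP, transpose_one, ← hAeq]
  rw [key, ← hVinv, myCharpolyConj _ _ hU]
  exact myKronCharpoly lam B hBtri α hBdiag
end

section
/- Let F be a field and A ∈ F^{n×n}. Then dim C_F(A,1) ≥ deg(m_A(t)), where m_A(t) is the minimal polynomial of A; moreover equality holds if and only if A is cyclic (i.e. c_A(t) = m_A(t)). -/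
open Matrix Module Polynomial
open scoped DirectSum

set_option linter.unusedSectionVars false

section EndCent
variable {F : Type*} [Field F] {M : Type*} [AddCommGroup M] [Module F M] [FiniteDimensional F M]

def centSubmodule (φ : Module.End F M) : Submodule F (Module.End F M) where
  carrier := {ψ | φ * ψ = ψ * φ}
  add_mem' := by
    intro a b ha hb
    simp only [Set.mem_setOf_eq] at *
    rw [mul_add, add_mul, ha, hb]
  zero_mem' := by simp
  smul_mem' := by
    intro c x hx
    simp only [Set.mem_setOf_eq] at *
    rw [mul_smul_comm, smul_mul_assoc, hx]

lemma mem_centSubmodule {φ ψ : Module.End F M} : ψ ∈ centSubmodule φ ↔ φ * ψ = ψ * φ := Iff.rfl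

lemma centL1 (φ : Module.End F M) : (minpoly F φ).natDegree ≤ finrank F (centSubmodule φ) := by
  have hli := linearIndependent_pow (K := F) (S := Module.End F M) φ
  set d := (minpoly F φ).natDegree
  let u : Fin d → centSubmodule φ := fun i => ⟨φ ^ (i : ℕ), by
    rw [mem_centSubmodule, ← pow_succ', ← pow_succ]⟩
  have hu : LinearIndependent F u := by
    apply LinearIndependent.of_comp (centSubmodule φ).subtype
    exact hli
  simpa using hu.fintype_card_le_finrank

variable (φ : Module.End F M)

/-- turn an `F[X]`-endomorphism of `AEval' φ` into an element of `End F M`. -/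
noncomputable def toCentFun (ψ' : Module.AEval' φ →ₗ[F[X]] Module.AEval' φ) : Module.End F M :=
  ((Module.AEval'.of φ).symm.toLinearMap.comp (ψ'.restrictScalars F)).comp
    (Module.AEval'.of φ).toLinearMap

lemma toCentFun_apply (ψ' : Module.AEval' φ →ₗ[F[X]] Module.AEval' φ) (m : M) :
    toCentFun φ ψ' m = (Module.AEval'.of φ).symm (ψ' (Module.AEval'.of φ m)) := rfl

lemma toCentFun_mem (ψ' : Module.AEval' φ →ₗ[F[X]] Module.AEval' φ) :
    toCentFun φ ψ' ∈ centSubmodule φ := by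
  rw [mem_centSubmodule]
  ext m
  show φ (toCentFun φ ψ' m) = toCentFun φ ψ' (φ m)
  rw [toCentFun_apply, toCentFun_apply, ← Module.AEval'.of_symm_X_smul, ← _root_.map_smul,
    ← Module.AEval'.X_smul_of]

end EndCent

universe u

section centL2sec
variable {F M : Type u} [Field F] [AddCommGroup M] [Module F M] [FiniteDimensional F M]

set_option maxHeartbeats 1000000 in
lemma centL2 (φ : Module.End F M) : finrank F M ≤ finrank F (centSubmodule φ) := by
  classical
  obtain ⟨ι, hι, p, hp, e, ⟨g⟩⟩ := Module.equiv_directSum_of_isTorsion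
      (Module.AEval.isTorsion_of_finiteDimensional F M φ)
  set Q : ι → Type u := fun i => F[X] ⧸ (Submodule.span F[X] {p i ^ e i} : Submodule F[X] F[X])
    with hQ
  -- the F-linear injection from ⨁ Q i into centSubmodule φ
  let z : (⨁ i, Q i) → (⨁ i, Q i) → (⨁ i, Q i) := fun r y =>
    DFinsupp.mapRange.linearMap (fun i => LinearMap.mulLeft F[X] (r i)) y
  have hz : ∀ r y i, z r y i = r i * y i := by
    intro r y i
    simp [z, DFinsupp.mapRange_apply]
  have hzadd : ∀ r r' y, z (r + r') y = z r y + z r' y := by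
    intro r r' y
    refine DFunLike.ext _ _ fun i => ?_
    rw [hz, DirectSum.add_apply, DirectSum.add_apply, hz, hz, add_mul]
  have hzsmul : ∀ (c : F) r y, z (c • r) y = c • z r y := by
    intro c r y
    refine DFunLike.ext _ _ fun i => ?_
    rw [hz, DFinsupp.smul_apply, DFinsupp.smul_apply, hz, smul_mul_assoc]
  let Θf : (⨁ i, Q i) → Module.End F M := fun r =>
    toCentFun φ ((g.symm.toLinearMap ∘ₗ
      (DFinsupp.mapRange.linearMap fun i => LinearMap.mulLeft F[X] (r i))) ∘ₗ g.toLinearMap)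
  have hΘf : ∀ r m, Θf r m =
      (Module.AEval'.of φ).symm (g.symm (z r (g (Module.AEval'.of φ m)))) := fun r m => rfl
  have hΘadd : ∀ r r', Θf (r + r') = Θf r + Θf r' := by
    intro r r'
    ext m
    show Θf (r + r') m = Θf r m + Θf r' m
    rw [hΘf, hΘf, hΘf, hzadd, map_add, map_add]
  have hΘsmul : ∀ (c : F) r, Θf (c • r) = c • Θf r := by
    intro c r
    ext m
    show Θf (c • r) m = c • Θf r m
    rw [hΘf, hΘf, hzsmul]
    have hgs : ∀ (w : ⨁ i, Q i), g.symm (c • w) = c • g.symm w := fun w =>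
      LinearMap.map_smul_of_tower g.symm.toLinearMap c w
    rw [hgs]
    exact (Module.AEval'.of φ).symm.map_smul c _
  let Θ : (⨁ i, Q i) →ₗ[F] Module.End F M :=
    { toFun := Θf, map_add' := hΘadd, map_smul' := hΘsmul }
  let ones : ⨁ i, Q i := DFinsupp.equivFunOnFintype.symm fun i =>
    Submodule.Quotient.mk (1 : F[X])
  have hones : ∀ i, ones i = Submodule.Quotient.mk (1 : F[X]) := fun i => by
    simp [ones, DFinsupp.equivFunOnFintype]
  have hΘinj : ∀ r, Θ r = 0 → r = 0 := by
    intro r hr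
    have h0 : Θf r ((Module.AEval'.of φ).symm (g.symm ones)) = 0 := by
      rw [show Θf r = Θ r from rfl, hr]; rfl
    rw [hΘf, LinearEquiv.apply_symm_apply, LinearEquiv.apply_symm_apply] at h0
    have h1 : z r ones = 0 := by
      have := (LinearEquiv.map_eq_zero_iff _).mp h0
      exact (LinearEquiv.map_eq_zero_iff _).mp this
    refine DFunLike.ext _ _ fun i => ?_
    have h2 := congrArg (fun w => w i) h1
    simp only [hz, hones] at h2
    have : Submodule.Quotient.mk (1 : F[X]) = (1 : Q i) := rfl
    rw [this, mul_one] at h2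
    rw [h2]
  let Θc : (⨁ i, Q i) →ₗ[F] centSubmodule φ := Θ.codRestrict (centSubmodule φ) fun r => toCentFun_mem φ _
  have hΘcinj : Function.Injective Θc := by
    letI : ∀ i, AddCommGroup (Q i) := fun i => Submodule.Quotient.addCommGroup _
    rw [← LinearMap.ker_eq_bot (f := Θc)]
    apply (Submodule.eq_bot_iff _).mpr
    intro r hr
    apply hΘinj
    have : Θ r = ((Θc r : centSubmodule φ) : Module.End F M) := rfl
    rw [LinearMap.mem_ker] at hr
    rw [this, hr]; rfl
  have e1 : finrank F M = finrank F (⨁ i, Q i) :=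
    ((Module.AEval'.of φ).trans (g.restrictScalars F)).finrank_eq
  rw [e1]
  exact LinearMap.finrank_le_finrank_of_injective hΘcinj
end centL2sec

set_option maxHeartbeats 1000000 in
lemma centL3 {F M : Type u} [Field F] [AddCommGroup M] [Module F M] [FiniteDimensional F M]
    (φ : Module.End F M) (h : (minpoly F φ).natDegree = finrank F M) :
    finrank F (centSubmodule φ) ≤ (minpoly F φ).natDegree := by
  classical
  obtain ⟨ι, hι, p, hp, e, ⟨g⟩⟩ := Module.equiv_directSum_of_isTorsion
      (Module.AEval.isTorsion_of_finiteDimensional F M φ)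
  set Q : ι → Type u := fun i => F[X] ⧸ (Submodule.span F[X] {p i ^ e i} : Submodule F[X] F[X])
    with hQ
  set q : F[X] := minpoly F φ with hq
  have hint : IsIntegral F φ := Algebra.IsIntegral.isIntegral (R := F) φ
  have hmon : q.Monic := minpoly.monic hint
  have hq0 : q ≠ 0 := hmon.ne_zero
  -- annihilation criterion on AEval'
  have hann : ∀ f : F[X], (∀ y : Module.AEval' φ, f • y = 0) ↔ f ∈ Ideal.span {q} := by
    intro f
    rw [Polynomial.span_minpoly_eq_annihilator F φ, Module.mem_annihilator]
  -- transport to N = ⨁ Q i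
  have hannN : ∀ f : F[X], (∀ x : ⨁ i, Q i, f • x = 0) ↔ f ∈ Ideal.span {q} := by
    intro f
    rw [← hann f]
    constructor
    · intro hf y
      have : f • g y = 0 := hf (g y)
      have := congrArg g.symm this
      rw [_root_.map_smul, g.symm_apply_apply, map_zero] at this
      exact this
    · intro hf x
      have : f • g.symm x = 0 := hf (g.symm x)
      have := congrArg g this
      rw [_root_.map_smul, g.apply_symm_apply, map_zero] at this
      exact this
  -- the all-ones element
  let ones : ⨁ i, Q i := DFinsupp.equivFunOnFintype.symm fun i =>
    Submodule.Quotient.mk (1 : F[X])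
  have hones : ∀ i, ones i = Submodule.Quotient.mk (1 : F[X]) := fun i => by
    simp [ones, DFinsupp.equivFunOnFintype]
  -- torsionOf ones = span {q}
  have htors : Ideal.torsionOf F[X] (⨁ i, Q i) ones = Ideal.span {q} := by
    ext f
    rw [Ideal.mem_torsionOf_iff, ← hannN f]
    constructor
    · intro hf x
      refine DFunLike.ext _ _ fun i => ?_
      have h1 : (f • ones) i = 0 := by rw [hf]; rfl
      rw [DFinsupp.smul_apply, hones] at h1
      rw [← Submodule.Quotient.mk_smul, smul_eq_mul, mul_one, Submodule.Quotient.mk_eq_zero] at h1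
      obtain ⟨c, hc⟩ := Submodule.mem_span_singleton.mp h1
      obtain ⟨s, hs⟩ := Submodule.Quotient.mk_surjective _ (x i)
      rw [DFinsupp.smul_apply, DFinsupp.zero_apply, ← hs, ← Submodule.Quotient.mk_smul,
        Submodule.Quotient.mk_eq_zero]
      refine Submodule.mem_span_singleton.mpr ⟨s * c, ?_⟩
      rw [smul_eq_mul] at hc ⊢
      rw [mul_assoc, hc, smul_eq_mul]
      ring
    · intro hf
      exact hf ones
  -- span of ones has dimension natDegree q
  have hNfin : FiniteDimensional F (⨁ i, Q i) :=
    Module.Finite.equiv ((Module.AEval'.of φ).trans (g.restrictScalars F))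
  have hqdim : finrank F (F[X] ⧸ (Ideal.span {q} : Ideal F[X])) = q.natDegree := by
    have h2 : finrank F (AdjoinRoot q) = q.natDegree := by
      rw [Module.finrank_eq_card_basis (AdjoinRoot.powerBasisAux' hmon), Fintype.card_fin]
    exact h2
  have hspan : finrank F ↥(Submodule.restrictScalars F
      (Submodule.span F[X] {ones})) = q.natDegree := by
    have e1 : (F[X] ⧸ (Ideal.span {q} : Ideal F[X])) ≃ₗ[F[X]]
        ↥(Submodule.span F[X] {ones}) :=
      (Submodule.quotEquivOfEq _ _ htors.symm).trans
        (Ideal.quotTorsionOfEquivSpanSingleton F[X] _ ones)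
    have e2 := (e1.restrictScalars F).finrank_eq
    exact e2.symm.trans hqdim
  have hNrank : finrank F (⨁ i, Q i) = finrank F M :=
    (((Module.AEval'.of φ).trans (g.restrictScalars F)).finrank_eq).symm
  have hgen : Submodule.span F[X] {ones} = ⊤ := by
    rw [← Submodule.restrictScalars_eq_top_iff (S := F)]
    letI : ∀ i, AddCommGroup (Q i) := fun i => Submodule.Quotient.addCommGroup _
    apply Submodule.eq_top_of_finrank_eq
    rw [hspan, h, hNrank]
  -- generator of AEval'
  set w : Module.AEval' φ := g.symm ones with hw
  have hwgen : Submodule.span F[X] {w} = ⊤ := by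
    have := congrArg (Submodule.map (g.symm.toLinearMap : (⨁ i, Q i) →ₗ[F[X]] Module.AEval' φ)) hgen
    rwa [Submodule.map_span, Set.image_singleton, Submodule.map_top,
      LinearEquiv.range] at this
  set T : Submodule F (Module.End F M) :=
    Submodule.span F (Set.range fun i : Fin (minpoly F φ).natDegree => φ ^ (i : ℕ)) with hT
  have hsub : centSubmodule φ ≤ T := by
    intro ψ hψ
    rw [mem_centSubmodule] at hψ
    let ψ' : Module.AEval' φ →ₗ[F[X]] Module.AEval' φ :=
      LinearMap.ofAEval φ ((Module.AEval'.of φ).toLinearMap.comp ψ) (fun m => by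
        show Module.AEval'.of φ (ψ (φ • m)) = X • Module.AEval'.of φ (ψ m)
        rw [Module.AEval'.X_smul_of]
        have hsm : φ • m = φ m := rfl
        rw [hsm]
        congr 1
        exact (LinearMap.ext_iff.mp hψ m).symm)
    have hψ'of : ∀ m : M, ψ' (Module.AEval'.of φ m) = Module.AEval'.of φ (ψ m) := fun m => rfl
    have hmemw : ψ' w ∈ Submodule.span F[X] {w} := by rw [hwgen]; exact Submodule.mem_top
    obtain ⟨c₀, hc₀⟩ := Submodule.mem_span_singleton.mp hmemw
    have hkey : ψ = Polynomial.aeval φ c₀ := by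
      ext m
      have hm : Module.AEval'.of φ m ∈ Submodule.span F[X] {w} := by
        rw [hwgen]; exact Submodule.mem_top
      obtain ⟨f, hf⟩ := Submodule.mem_span_singleton.mp hm
      have h1 : Module.AEval'.of φ (ψ m) = c₀ • Module.AEval'.of φ m := by
        rw [← hψ'of m, ← hf, ψ'.map_smul, ← hc₀, smul_smul, smul_smul, mul_comm]
      have h2 := congrArg (Module.AEval'.of φ).symm h1
      rw [LinearEquiv.symm_apply_apply, Module.AEval.of_symm_smul] at h2
      exact h2
    rw [hkey]
    have hdvd : Polynomial.aeval φ c₀ = Polynomial.aeval φ (c₀ %ₘ q) := by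
      conv_lhs => rw [← Polynomial.modByMonic_add_div c₀ q]
      rw [map_add, _root_.map_mul, hq, minpoly.aeval, zero_mul, add_zero]
    rw [hdvd]
    by_cases hc : c₀ %ₘ q = 0
    · rw [hc, map_zero]; exact T.zero_mem
    · have hlt : (c₀ %ₘ q).natDegree < (minpoly F φ).natDegree :=
        Polynomial.natDegree_lt_natDegree hc (Polynomial.degree_modByMonic_lt c₀ hmon)
      rw [Polynomial.aeval_eq_sum_range' hlt]
      apply Submodule.sum_mem
      intro i hi
      apply Submodule.smul_mem
      apply Submodule.subset_span
      exact ⟨⟨i, Finset.mem_range.mp hi⟩, rfl⟩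
  calc finrank F ↥(centSubmodule φ) ≤ finrank F ↥T := Submodule.finrank_mono hsub
    _ ≤ (minpoly F φ).natDegree := by
      apply (finrank_span_le_card _).trans
      rw [Set.toFinset_range]
      exact (Finset.card_image_le).trans (by simp)

theorem dim_centralizer_ge_deg_minpoly {F : Type*} [Field F] {n : ℕ}
    (A : Matrix (Fin n) (Fin n) F) :
    (minpoly F A).natDegree ≤ finrank F (twistedCentralizer A 1) ∧
    (finrank F (twistedCentralizer A 1) = (minpoly F A).natDegree ↔
      A.charpoly = minpoly F A) := by
  classical
  set e := Matrix.toLinAlgEquiv' (R := F) (n := Fin n) with he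
  set φ : Module.End F (Fin n → F) := e A with hφ
  have hmin : minpoly F φ = minpoly F A := minpoly.algEquiv_eq e A
  have hmem : ∀ B, B ∈ twistedCentralizer A 1 ↔ A * B = B * A := by
    intro B
    rw [twistedCentralizer, LinearMap.mem_ker, LinearMap.sub_apply, LinearMap.smul_apply,
      one_smul, LinearMap.mulLeft_apply, LinearMap.mulRight_apply, sub_eq_zero]
  have hmap : (twistedCentralizer A 1).map e.toLinearEquiv.toLinearMap = centSubmodule φ := by
    ext ψ
    constructor
    · rintro ⟨B, hB, rfl⟩
      show e B ∈ centSubmodule φ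
      rw [mem_centSubmodule, hφ, ← _root_.map_mul, ← _root_.map_mul, (hmem B).mp hB]
    · intro hψ
      refine ⟨e.symm ψ, ?_, by simp⟩
      show e.symm ψ ∈ twistedCentralizer A 1
      rw [hmem]
      apply e.injective
      rw [_root_.map_mul, _root_.map_mul, AlgEquiv.apply_symm_apply]
      rw [mem_centSubmodule, hφ] at hψ
      exact hψ
  have hfr : finrank F (twistedCentralizer A 1) = finrank F (centSubmodule φ) := by
    rw [← hmap]
    exact (LinearEquiv.finrank_map_eq e.toLinearEquiv _).symm
  have hrank : finrank F (Fin n → F) = n := Module.finrank_fin_fun F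
  have hcentL1 : (minpoly F A).natDegree ≤ finrank F (centSubmodule φ) := by
    rw [← hmin]; exact centL1 φ
  have hcentL2 : n ≤ finrank F (centSubmodule φ) := by
    have := centL2 φ
    rwa [hrank] at this
  have hdn : (minpoly F A).natDegree ≤ n := by
    have := Polynomial.natDegree_le_of_dvd (Matrix.minpoly_dvd_charpoly A)
      (Matrix.charpoly_monic A).ne_zero
    rwa [Matrix.charpoly_natDegree_eq_dim, Fintype.card_fin] at this
  refine ⟨by rw [hfr]; exact hcentL1, ?_, ?_⟩
  · intro hEq
    have h1 : n ≤ (minpoly F A).natDegree := by rw [← hEq, hfr]; exact hcentL2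
    have hdn' : (minpoly F A).natDegree = n := le_antisymm hdn h1
    obtain ⟨k, hk⟩ := Matrix.minpoly_dvd_charpoly A
    have hmonM : (minpoly F A).Monic :=
      minpoly.monic (Algebra.IsIntegral.isIntegral (R := F) A)
    have hkm : k.Monic := hmonM.of_mul_monic_left (hk ▸ Matrix.charpoly_monic A)
    have hdeg : k.natDegree = 0 := by
      have h2 := congrArg Polynomial.natDegree hk
      rw [Polynomial.natDegree_mul hmonM.ne_zero hkm.ne_zero,
        Matrix.charpoly_natDegree_eq_dim, Fintype.card_fin, hdn'] at h2
      omega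
    have hk1 : k = 1 := hkm.natDegree_eq_zero.mp hdeg
    rw [hk, hk1, mul_one]
  · intro hc
    have hd' : (minpoly F A).natDegree = n := by
      rw [← hc, Matrix.charpoly_natDegree_eq_dim, Fintype.card_fin]
    have hcentL3 : finrank F (centSubmodule φ) ≤ (minpoly F A).natDegree := by
      rw [← hmin]
      exact centL3 φ (by rw [hmin]; exact hd'.trans hrank.symm)
    rw [hfr]
    exact le_antisymm hcentL3 hcentL1
end

section
/- Let q be a prime power, F = F_q the finite field with q elements, n ≥ 1, and λ ∈ F. Then the number of matrices A ∈ F^{n×n} with C_F(A,λ) ≠ {0} is at least q^{n²−1}; equivalently, the probability that a uniformly distributed A ∈ F^{n×n} satisfies C_F(A,λ) ≠ {0} is at least q⁻¹. -/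
open Matrix Module

lemma twistedCentralizer_ne_bot_of_det_eq_zero {F : Type*} [Field F] {m : Type*} [Fintype m]
    [DecidableEq m] {A : Matrix m m F} (hA : A.det = 0) (lam : F) :
    twistedCentralizer A lam ≠ ⊥ := by
  obtain ⟨v, hv, hAv⟩ := (Matrix.exists_mulVec_eq_zero_iff).2 hA
  obtain ⟨w, hw, hAw⟩ := (Matrix.exists_mulVec_eq_zero_iff).2 (by rwa [Matrix.det_transpose] : Aᵀ.det = 0)
  have hwA : w ᵥ* A = 0 := by rwa [Matrix.mulVec_transpose] at hAw
  set B : Matrix m m F := Matrix.vecMulVec v w with hB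
  have hBne : B ≠ 0 := by
    obtain ⟨i, hi⟩ := Function.ne_iff.1 hv
    obtain ⟨j, hj⟩ := Function.ne_iff.1 hw
    intro h
    have := congrFun (congrFun h i) j
    simp only [Matrix.vecMulVec_apply, Matrix.zero_apply, hB] at this
    exact hj (by
      rcases mul_eq_zero.1 this with h' | h'
      · exact absurd h' hi
      · exact h')
  have hAB : A * B = 0 := by
    ext i j
    simp only [Matrix.mul_apply, Matrix.vecMulVec_apply, Matrix.zero_apply, hB]
    have : ∑ k, A i k * (v k * w j) = (∑ k, A i k * v k) * w j := by
      rw [Finset.sum_mul]; exact Finset.sum_congr rfl fun k _ => by ring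
    rw [this]
    have : (∑ k, A i k * v k) = (A *ᵥ v) i := rfl
    rw [this, hAv]; simp
  have hBA : B * A = 0 := by
    ext i j
    simp only [Matrix.mul_apply, Matrix.vecMulVec_apply, Matrix.zero_apply, hB]
    have : ∑ k, v i * w k * A k j = v i * ∑ k, w k * A k j := by
      rw [Finset.mul_sum]; exact Finset.sum_congr rfl fun k _ => by ring
    rw [this]
    have : (∑ k, w k * A k j) = (w ᵥ* A) j := rfl
    rw [this, hwA]; simp
  intro hbot
  apply hBne
  have hmem : B ∈ twistedCentralizer A lam := by
    simp only [twistedCentralizer, LinearMap.mem_ker, LinearMap.sub_apply,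
      LinearMap.smul_apply, LinearMap.mulLeft_apply, LinearMap.mulRight_apply, hAB, hBA]
    simp
  rw [hbot] at hmem
  exact hmem

theorem card_twistedCentralizer_ne_bot {F : Type*} [Field F] [Fintype F] {n : ℕ}
    (hn : 1 ≤ n) (lam : F) :
    Fintype.card F ^ (n ^ 2 - 1) ≤
      Nat.card {A : Matrix (Fin n) (Fin n) F // twistedCentralizer A lam ≠ ⊥} := by
  classical
  set q := Fintype.card F with hq
  have hq1 : 1 ≤ q := Fintype.card_pos
  obtain ⟨m, rfl⟩ : ∃ m, n = m + 1 := ⟨n - 1, by omega⟩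
  -- cardinality of GL
  have hGL : Nat.card (GL (Fin (m+1)) F) = ∏ i : Fin (m+1), (q ^ (m+1) - q ^ (i : ℕ)) :=
    Matrix.card_GL_field (m+1)
  -- bound on the product
  have hprod : ∏ i : Fin (m+1), (q ^ (m+1) - q ^ (i : ℕ)) ≤
      q ^ ((m+1) ^ 2) - q ^ ((m+1) ^ 2 - 1) := by
    rw [Fin.prod_univ_castSucc]
    have h1 : ∏ i : Fin m, (q ^ (m+1) - q ^ ((Fin.castSucc i : Fin (m+1)) : ℕ)) ≤
        ∏ _i : Fin m, q ^ (m+1) :=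
      Finset.prod_le_prod' fun i _ => Nat.sub_le _ _
    have h2 : ((Fin.last m : Fin (m+1)) : ℕ) = m := rfl
    have e1 : (m+1) * m + (m+1) = (m+1) ^ 2 := by ring
    have e2 : (m+1) * m + m = (m+1) ^ 2 - 1 := by
      have : (m+1) ^ 2 = ((m+1) * m + m) + 1 := by ring
      omega
    calc (∏ i : Fin m, (q ^ (m+1) - q ^ ((Fin.castSucc i : Fin (m+1)) : ℕ))) *
          (q ^ (m+1) - q ^ ((Fin.last m : Fin (m+1)) : ℕ))
        ≤ (∏ _i : Fin m, q ^ (m+1)) * (q ^ (m+1) - q ^ m) := by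
          rw [h2]; exact Nat.mul_le_mul_right _ h1
      _ = q ^ ((m+1) * m) * (q ^ (m+1) - q ^ m) := by
          rw [Finset.prod_const, Finset.card_univ, Fintype.card_fin, ← pow_mul]
      _ = q ^ ((m+1) ^ 2) - q ^ ((m+1) ^ 2 - 1) := by
          rw [Nat.mul_sub, ← pow_add, ← pow_add, e1, e2]
  set n := m + 1
  -- card of invertible matrices equals card GL
  have hunits : Nat.card {A : Matrix (Fin n) (Fin n) F // IsUnit A.det} =
      Nat.card (GL (Fin n) F) := by
    refine Nat.card_congr (Equiv.symm ?_)
    exact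
      { toFun := fun u => ⟨(u : Matrix (Fin n) (Fin n) F),
          (Matrix.isUnit_iff_isUnit_det _).1 u.isUnit⟩
        invFun := fun A => ((Matrix.isUnit_iff_isUnit_det _).2 A.2).unit
        left_inv := fun u => Units.ext rfl
        right_inv := fun A => Subtype.ext rfl }
  -- total count
  have htotal : Fintype.card (Matrix (Fin n) (Fin n) F) = q ^ (n ^ 2) := by
    rw [show Fintype.card (Matrix (Fin n) (Fin n) F) = Fintype.card (Fin n → Fin n → F) from
      Fintype.card_congr Matrix.of.symm]
    rw [Fintype.card_fun, Fintype.card_fun, Fintype.card_fin, ← pow_mul, ← hq, sq]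
  have hsing : Nat.card {A : Matrix (Fin n) (Fin n) F // ¬ IsUnit A.det} =
      q ^ (n ^ 2) - Nat.card (GL (Fin n) F) := by
    rw [Nat.card_eq_fintype_card, Fintype.card_subtype_compl, htotal, ← hunits,
      Nat.card_eq_fintype_card]
  have hmono : Nat.card {A : Matrix (Fin n) (Fin n) F // ¬ IsUnit A.det} ≤
      Nat.card {A : Matrix (Fin n) (Fin n) F // twistedCentralizer A lam ≠ ⊥} := by
    rw [Nat.card_eq_fintype_card, Nat.card_eq_fintype_card]
    refine Fintype.card_subtype_mono _ _ fun A hA => ?_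
    refine twistedCentralizer_ne_bot_of_det_eq_zero ?_ lam
    by_contra h
    exact hA (isUnit_iff_ne_zero.2 h)
  have hle : q ^ (n ^ 2 - 1) ≤ q ^ (n ^ 2) - Nat.card (GL (Fin n) F) := by
    have hGLle : Nat.card (GL (Fin n) F) ≤ q ^ (n ^ 2) - q ^ (n ^ 2 - 1) := hGL ▸ hprod
    have hpowle : q ^ (n ^ 2 - 1) ≤ q ^ (n ^ 2) := Nat.pow_le_pow_right hq1 (by omega)
    omega
  calc q ^ (n ^ 2 - 1) ≤ q ^ (n ^ 2) - Nat.card (GL (Fin n) F) := hle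
    _ = Nat.card {A : Matrix (Fin n) (Fin n) F // ¬ IsUnit A.det} := hsing.symm
    _ ≤ _ := hmono
end

section
/- Let 1 ≤ s ≤ r be integers and let σ : {1,…,s} → {1,…,r} be an injective map with no fixed points (σ(i) ≠ i for all i). Then there exists a subset Z ⊆ {1,…,r} with |Z| ∈ {r−1, r} such that {1,…,s} ⊆ Z and σ({1,…,s}) ⊆ Z, and a bijection τ : Z → Z with no fixed points satisfying τ(i) = σ(i) for all 1 ≤ i ≤ s. -/
lemma bijOn_pair {f : ℕ → ℕ} {a b c d : ℕ} (hab : a ≠ b) (hcd : c ≠ d)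
    (hfa : f a = c) (hfb : f b = d) : Set.BijOn f ({a, b} : Set ℕ) {c, d} := by
  refine ⟨?_, ?_, ?_⟩
  · rintro x (rfl | rfl) <;> simp [hfa, hfb]
  · rintro x (rfl | rfl) y (rfl | rfl) h <;> simp_all
  · rintro y (rfl | rfl)
    · exact ⟨a, by simp, hfa⟩
    · exact ⟨b, by simp, hfb⟩

lemma exists_fpf_bijOn : ∀ (n : ℕ) (U V : Finset ℕ), U.card = n → V.card = n →
    ¬(U = V ∧ n = 1) → ∃ g : ℕ → ℕ, Set.BijOn g ↑U ↑V ∧ ∀ u ∈ U, g u ≠ u := by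
  intro n
  induction n using Nat.strong_induction_on with
  | _ n ih =>
    intro U V hU hV hbad
    match n, hU, hV, hbad with
    | 0, hU, hV, _ =>
      rw [Finset.card_eq_zero] at hU hV
      subst hU; subst hV
      exact ⟨id, by simp, by simp⟩
    | 1, hU, hV, hbad =>
      obtain ⟨a, rfl⟩ := Finset.card_eq_one.mp hU
      obtain ⟨b, rfl⟩ := Finset.card_eq_one.mp hV
      have hab : a ≠ b := fun h => hbad ⟨by rw [h], rfl⟩
      exact ⟨fun _ => b, by simp [Set.bijOn_singleton], by simpa using hab.symm⟩
    | 2, hU, hV, _ =>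
      obtain ⟨a, b, hab, rfl⟩ := Finset.card_eq_two.mp hU
      obtain ⟨c, d, hcd, rfl⟩ := Finset.card_eq_two.mp hV
      by_cases h : a ≠ c ∧ b ≠ d
      · refine ⟨fun x => if x = a then c else d, ?_, ?_⟩
        · push_cast
          exact bijOn_pair hab hcd (by simp) (by simp [hab.symm])
        · intro u hu
          simp only [Finset.mem_insert, Finset.mem_singleton] at hu
          rcases hu with rfl | rfl
          · simp [h.1.symm]
          · simp [hab.symm, h.2.symm]
      · -- a = c or b = d; use a ↦ d, b ↦ c
        have had : a ≠ d := by
          rcases not_and_or.mp h with h' | h'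
          · push_neg at h'; subst h'; exact hcd
          · push_neg at h'; subst h'; exact hab
        have hbc : b ≠ c := by
          rcases not_and_or.mp h with h' | h'
          · push_neg at h'; subst h'; exact hab.symm
          · push_neg at h'; subst h'; exact hcd.symm
        refine ⟨fun x => if x = a then d else c, ?_, ?_⟩
        · push_cast
          have : ({c, d} : Set ℕ) = {d, c} := by ext; simp [or_comm]
          rw [this]
          exact bijOn_pair hab hcd.symm (by simp) (by simp [hab.symm])
        · intro u hu
          simp only [Finset.mem_insert, Finset.mem_singleton] at hu
          rcases hu with rfl | rfl
          · simp [had.symm]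
          · simp [hab.symm, hbc.symm]
    | (m+3), hU, hV, _ =>
      have hUne : U.Nonempty := Finset.card_pos.mp (by omega)
      obtain ⟨u, hu⟩ := hUne
      have h2 : 1 < V.card := by omega
      obtain ⟨x, hx, y, hy, hxy⟩ := Finset.one_lt_card.mp h2
      obtain ⟨v, hv, hvu⟩ : ∃ v ∈ V, v ≠ u := by
        by_cases hxu : x = u
        · exact ⟨y, hy, by rw [← hxu]; exact hxy.symm⟩
        · exact ⟨x, hx, hxu⟩
      obtain ⟨g', hg', hg'fp⟩ := ih (m + 2) (by omega) (U.erase u) (V.erase v)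
        (by simp [Finset.card_erase_of_mem hu, hU])
        (by simp [Finset.card_erase_of_mem hv, hV])
        (by simp)
      refine ⟨fun x => if x = u then v else g' x, ⟨?_, ?_, ?_⟩, ?_⟩
      · intro z hz
        have hzU : z ∈ U := Finset.mem_coe.mp hz
        by_cases hzu : z = u
        · simp only [hzu, if_true]
          exact Finset.mem_coe.mpr hv
        · simp only [hzu, if_false]
          have : g' z ∈ V.erase v :=
            Finset.mem_coe.mp (hg'.mapsTo (Finset.mem_coe.mpr (Finset.mem_erase.mpr ⟨hzu, hzU⟩)))
          exact Finset.mem_coe.mpr (Finset.mem_of_mem_erase this)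
      · intro z1 h1 z2 h2 heq
        have h1U : z1 ∈ U := Finset.mem_coe.mp h1
        have h2U : z2 ∈ U := Finset.mem_coe.mp h2
        by_cases hz1 : z1 = u <;> by_cases hz2 : z2 = u
        · rw [hz1, hz2]
        · simp only [hz1, hz2, if_true, if_false] at heq
          exfalso
          have : g' z2 ∈ V.erase v :=
            Finset.mem_coe.mp (hg'.mapsTo (Finset.mem_coe.mpr (Finset.mem_erase.mpr ⟨hz2, h2U⟩)))
          rw [← heq] at this
          exact (Finset.mem_erase.mp this).1 rfl
        · simp only [hz1, hz2, if_true, if_false] at heq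
          exfalso
          have : g' z1 ∈ V.erase v :=
            Finset.mem_coe.mp (hg'.mapsTo (Finset.mem_coe.mpr (Finset.mem_erase.mpr ⟨hz1, h1U⟩)))
          rw [heq] at this
          exact (Finset.mem_erase.mp this).1 rfl
        · simp only [hz1, hz2, if_false] at heq
          exact hg'.injOn (Finset.mem_coe.mpr (Finset.mem_erase.mpr ⟨hz1, h1U⟩))
            (Finset.mem_coe.mpr (Finset.mem_erase.mpr ⟨hz2, h2U⟩)) heq
      · intro w hw
        have hwV : w ∈ V := Finset.mem_coe.mp hw
        by_cases hwv : w = v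
        · exact ⟨u, Finset.mem_coe.mpr hu, by simp [hwv]⟩
        · obtain ⟨z, hz, hgz⟩ := hg'.surjOn
            (Finset.mem_coe.mpr (Finset.mem_erase.mpr ⟨hwv, hwV⟩))
          have hzU := Finset.mem_coe.mp hz
          have hzu : z ≠ u := (Finset.mem_erase.mp hzU).1
          exact ⟨z, Finset.mem_coe.mpr (Finset.mem_of_mem_erase hzU), by simp [hzu, hgz]⟩
      · intro z hz
        by_cases hzu : z = u
        · simpa [hzu] using hvu
        · simp only [hzu, if_false]
          exact hg'fp z (Finset.mem_erase.mpr ⟨hzu, hz⟩)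
theorem extend_fixedPointFree_injection_to_derangement
    (s r : ℕ) (hs : 1 ≤ s) (hsr : s ≤ r) (σ : ℕ → ℕ)
    (hinj : Set.InjOn σ (Set.Icc 1 s))
    (hmaps : ∀ i ∈ Finset.Icc 1 s, σ i ∈ Finset.Icc 1 r)
    (hfpf : ∀ i ∈ Finset.Icc 1 s, σ i ≠ i) :
    ∃ Z : Finset ℕ, Z ⊆ Finset.Icc 1 r ∧ (Z.card = r - 1 ∨ Z.card = r) ∧
      (∀ i ∈ Finset.Icc 1 s, i ∈ Z ∧ σ i ∈ Z) ∧
      ∃ τ : ℕ → ℕ, Set.BijOn τ Z Z ∧ (∀ z ∈ Z, τ z ≠ z) ∧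
        ∀ i ∈ Finset.Icc 1 s, τ i = σ i := by
  set A : Finset ℕ := Finset.Icc 1 s with hA
  set R : Finset ℕ := Finset.Icc 1 r with hR
  have hinj' : Set.InjOn σ ↑A := by rw [hA, Finset.coe_Icc]; exact hinj
  set B : Finset ℕ := A.image σ with hB
  have hAR : A ⊆ R := Finset.Icc_subset_Icc_right hsr
  have hBR : B ⊆ R := by
    intro x hx
    obtain ⟨i, hi, rfl⟩ := Finset.mem_image.mp hx
    exact hmaps i hi
  have hcardA : A.card = s := by simp [hA]
  have hcardR : R.card = r := by simp [hR]
  have hcardB : B.card = s := by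
    rw [hB, Finset.card_image_of_injOn hinj', hcardA]
  set U : Finset ℕ := R \ A with hU
  set V : Finset ℕ := R \ B with hV
  have hcardU : U.card = r - s := by rw [hU, Finset.card_sdiff_of_subset hAR, hcardA, hcardR]
  have hcardV : V.card = r - s := by rw [hV, Finset.card_sdiff_of_subset hBR, hcardB, hcardR]
  by_cases hcase : U = V ∧ r - s = 1
  · -- degenerate case: drop the single common missing point, Z = Icc 1 s
    obtain ⟨hUV, hrs⟩ := hcase
    have hBA : B = A := by
      have h1 : R \ U = A := Finset.sdiff_sdiff_eq_self hAR
      have h2 : R \ V = B := Finset.sdiff_sdiff_eq_self hBR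
      rw [← h2, ← hUV, h1]
    refine ⟨A, hAR, Or.inl (by omega), fun i hi => ⟨hi, hBA ▸ Finset.mem_image_of_mem σ hi⟩,
      σ, ⟨?_, hinj', ?_⟩, fun z hz => hfpf z hz, fun i _ => rfl⟩
    · intro z hz
      exact Finset.mem_coe.mpr (hBA ▸ Finset.mem_image_of_mem σ (Finset.mem_coe.mp hz))
    · intro y hy
      have : y ∈ B := hBA ▸ Finset.mem_coe.mp hy
      obtain ⟨i, hi, rfl⟩ := Finset.mem_image.mp this
      exact ⟨i, Finset.mem_coe.mpr hi, rfl⟩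
  · -- main case: Z = Icc 1 r
    obtain ⟨g, hg, hgfp⟩ := exists_fpf_bijOn (r - s) U V hcardU hcardV hcase
    set τ : ℕ → ℕ := fun z => if z ∈ A then σ z else g z with hτ
    have hστ : Set.BijOn τ ↑A ↑B := by
      refine Set.BijOn.congr ⟨?_, hinj', ?_⟩ ?_
      · intro z hz
        exact Finset.mem_coe.mpr (Finset.mem_image_of_mem σ (Finset.mem_coe.mp hz))
      · intro y hy
        obtain ⟨i, hi, rfl⟩ := Finset.mem_image.mp (Finset.mem_coe.mp hy)
        exact ⟨i, Finset.mem_coe.mpr hi, rfl⟩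
      · intro z hz
        simp [hτ, Finset.mem_coe.mp hz]
    have hgτ : Set.BijOn τ ↑U ↑V := by
      refine Set.BijOn.congr hg ?_
      intro z hz
      have : z ∉ A := (Finset.mem_sdiff.mp (Finset.mem_coe.mp hz)).2
      simp [hτ, this]
    have hunionA : (↑A ∪ ↑U : Set ℕ) = ↑R := by
      rw [← Finset.coe_union, Finset.union_sdiff_of_subset hAR]
    have hunionB : (↑B ∪ ↑V : Set ℕ) = ↑R := by
      rw [← Finset.coe_union, Finset.union_sdiff_of_subset hBR]
    have hbij : Set.BijOn τ ↑R ↑R := by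
      nth_rewrite 2 [← hunionB]
      rw [← hunionA]
      refine Set.BijOn.union hστ hgτ ?_
      intro z1 h1 z2 h2 heq
      rcases h1 with h1 | h1 <;> rcases h2 with h2 | h2
      · exact hστ.injOn h1 h2 heq
      · exfalso
        have e1 : τ z1 ∈ B := Finset.mem_coe.mp (hστ.mapsTo h1)
        have e2 : τ z2 ∈ V := Finset.mem_coe.mp (hgτ.mapsTo h2)
        rw [heq] at e1
        exact (Finset.mem_sdiff.mp e2).2 e1
      · exfalso
        have e1 : τ z1 ∈ V := Finset.mem_coe.mp (hgτ.mapsTo h1)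
        have e2 : τ z2 ∈ B := Finset.mem_coe.mp (hστ.mapsTo h2)
        rw [heq] at e1
        exact (Finset.mem_sdiff.mp e1).2 e2
      · exact hgτ.injOn h1 h2 heq
    refine ⟨R, subset_rfl, Or.inr hcardR,
      fun i hi => ⟨hAR hi, hBR (Finset.mem_image_of_mem σ hi)⟩,
      τ, hbij, ?_, fun i hi => by simp [hτ, hi]⟩
    intro z hz
    by_cases hzA : z ∈ A
    · have : τ z = σ z := by simp [hτ, hzA]
      rw [this]; exact hfpf z hzA
    · have : τ z = g z := by simp [hτ, hzA]
      rw [this]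
      exact hgfp z (Finset.mem_sdiff.mpr ⟨hz, hzA⟩)
end

section
/- Let F be a field, λ ∈ F, and let A ∈ F^{n×n} be a matrix that is not a scalar matrix (A ≠ αI for all α ∈ F). Then dim C_F(A,λ) ≤ n² − n. -/
open Matrix Module

/-- If every vector is an eigenvector of `A.mulVec`, then `A` is scalar. -/
lemma exists_not_eigen {F : Type*} [Field F] {n : ℕ} (A : Matrix (Fin n) (Fin n) F)
    (hA : ∀ α : F, A ≠ α • (1 : Matrix (Fin n) (Fin n) F)) :
    ∃ v : Fin n → F, ∀ c : F, A.mulVec v ≠ c • v := by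
  by_contra h
  push_neg at h
  choose c hc using h
  -- n = 0 case: A is scalar vacuously
  rcases Nat.eq_zero_or_pos n with hn | hn
  · exact hA 0 (by subst hn; exact Subsingleton.elim _ _)
  set e : Fin n → (Fin n → F) := fun i => Pi.single i 1 with he
  -- claim: all eigenvalues of basis vectors agree
  have key : ∀ i : Fin n, c (e i) = c (e ⟨0, hn⟩) := by
    intro i
    by_cases hi : i = ⟨0, hn⟩
    · rw [hi]
    · have h1 := hc (e i + e ⟨0, hn⟩)
      have h2 := hc (e i)
      have h3 := hc (e ⟨0, hn⟩)
      have hmv : A.mulVec (e i + e ⟨0, hn⟩) = A.mulVec (e i) + A.mulVec (e ⟨0, hn⟩) := by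
        rw [Matrix.mulVec_add]
      rw [hmv, h2, h3] at h1
      have hii := congrFun h1 i
      have hzz := congrFun h1 ⟨0, hn⟩
      simp only [Pi.add_apply, Pi.smul_apply, smul_eq_mul, he, Pi.single_eq_same,
        Pi.single_eq_of_ne (Ne.symm hi), Pi.single_eq_of_ne hi] at hii hzz
      simp only [mul_zero, mul_one, add_zero, zero_add] at hii hzz
      rw [hii, hzz]
  apply hA (c (e ⟨0, hn⟩))
  ext i j
  have := congrFun (hc (e j)) i
  rw [key j] at this
  have hv : A.mulVec (e j) i = A i j := by
    simp [Matrix.mulVec, dotProduct, he, Pi.single_apply, mul_comm]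
  rw [hv] at this
  rcases eq_or_ne i j with rfl | hij
  · simpa [he] using this
  · simp only [he, Pi.smul_apply, smul_eq_mul, Pi.single_eq_of_ne hij, mul_zero] at this
    simp [this, Matrix.one_apply_ne hij]

theorem dim_twistedCentralizer_le_nonscalar {F : Type*} [Field F] {n : ℕ}
    (lam : F) (A : Matrix (Fin n) (Fin n) F)
    (hA : ∀ α : F, A ≠ α • (1 : Matrix (Fin n) (Fin n) F)) :
    finrank F (twistedCentralizer A lam) ≤ n ^ 2 - n := by
  obtain ⟨v, hv⟩ := exists_not_eigen A hA
  set T : Matrix (Fin n) (Fin n) F →ₗ[F] Matrix (Fin n) (Fin n) F :=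
    LinearMap.mulLeft F A - lam • LinearMap.mulRight F A with hT
  -- the linear map w ↦ vecMulVec v w
  set L : (Fin n → F) →ₗ[F] Matrix (Fin n) (Fin n) F :=
    { toFun := fun w => vecMulVec v w
      map_add' := by intro w₁ w₂; ext i j; simp [vecMulVec_apply, mul_add]
      map_smul' := by intro a w; ext i j; simp [vecMulVec_apply, mul_comm, mul_left_comm] } with hL
  have hinj : Function.Injective (T ∘ₗ L) := by
    rw [← LinearMap.ker_eq_bot, LinearMap.ker_eq_bot']
    intro w hw
    simp only [LinearMap.comp_apply, hT, LinearMap.sub_apply, LinearMap.smul_apply,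
      LinearMap.mulLeft_apply, LinearMap.mulRight_apply, sub_eq_zero, hL,
      LinearMap.coe_mk, AddHom.coe_mk] at hw
    by_contra hw0
    obtain ⟨j, hj⟩ : ∃ j, w j ≠ 0 := Function.ne_iff.mp hw0
    -- entries: (A.mulVec v) i * w j = lam * (v i * (w ᵥ* A) j)
    have hentry : ∀ i, A.mulVec v i * w j = lam * (v i * (w ᵥ* A) j) := by
      intro i
      have := congrFun (congrFun hw i) j
      simpa [Matrix.mul_apply, vecMulVec_apply, Matrix.mulVec, Matrix.vecMul, dotProduct,
        Finset.mul_sum, Finset.sum_mul, mul_comm, mul_left_comm, mul_assoc] using this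
    apply hv (lam * (w ᵥ* A) j / w j)
    ext i
    have := hentry i
    field_simp
    rw [Pi.smul_apply, smul_eq_mul, div_mul_eq_mul_div, eq_div_iff hj, this]; ring
  have hrange : n ≤ finrank F (LinearMap.range T) := by
    have h1 : finrank F (LinearMap.range (T ∘ₗ L)) = n := by
      rw [LinearMap.finrank_range_of_inj hinj]
      simp
    have h2 : LinearMap.range (T ∘ₗ L) ≤ LinearMap.range T := by
      rw [LinearMap.range_comp]; exact LinearMap.map_le_range
    calc n = finrank F (LinearMap.range (T ∘ₗ L)) := h1.symm
      _ ≤ finrank F (LinearMap.range T) := Submodule.finrank_mono h2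
  have hsum := LinearMap.finrank_range_add_finrank_ker T
  have hdim : finrank F (Matrix (Fin n) (Fin n) F) = n ^ 2 := by
    rw [Module.finrank_matrix]
    simp [sq]
  rw [hdim] at hsum
  have : finrank F (twistedCentralizer A lam) = finrank F (LinearMap.ker T) := rfl
  omega
end
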